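/- arXiv:2409.08430 — 5 statements merged into one kernel-verified Lean document; each statement's English description precedes it below -/
import Mathlib

section
/- If for all i, s_i(0), x_i(0) ∈ [0,1] with s_i(0)+x_i(0) ≤ 1, and w_j(0) ≥ 0 for all j, then for all t ≥ 0 the solution of the multilayer SIR system satisfies x_i(t) ∈ [0,1], s_i(t) ∈ [0,1], s_i(t)+x_i(t) ≤ 1 for all population nodes i, and w_j(t) ≥ 0 for all resource nodes j. -/
open Matrix BigOperators Set

noncomputable def specRad {N : Type*} [Fintype N] [DecidableEq N] (M : Matrix N N ℝ) : ℝ :=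
  sSup {r : ℝ | ∃ μ ∈ spectrum ℂ (M.map (Complex.ofReal ·)), r = ‖μ‖}

noncomputable def lamMax {N : Type*} [Fintype N] [DecidableEq N] (M : Matrix N N ℝ) : ℝ :=
  sSup {r : ℝ | ∃ μ ∈ spectrum ℂ (M.map (Complex.ofReal ·)), r = μ.re}

def Irred {N : Type*} [Fintype N] [DecidableEq N] (M : Matrix N N ℝ) : Prop :=
  ∀ i j : N, ∃ k : ℕ, 0 < (M ^ k) i j

section helper
open Filter Topology
open Filter Topology

lemma quasipos_nonneg {ι : Type*} [Fintype ι] (z z' : ℝ → ι → ℝ)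
    (hz : ∀ i t, HasDerivAt (fun τ => z τ i) (z' t i) t)
    (T c : ℝ)
    (key : ∀ t ∈ Set.Icc (0:ℝ) T, ∀ i, ∀ a : ℝ, 0 < a → z t i = -a →
      (∀ j, -a ≤ z t j) → -(c * a) ≤ z' t i)
    (h0 : ∀ i, 0 ≤ z 0 i) :
    ∀ t ∈ Set.Icc (0:ℝ) T, ∀ i, 0 ≤ z t i := by
  have hcont : ∀ i, Continuous fun τ => z τ i := fun i =>
    continuous_iff_continuousAt.mpr fun τ => (hz i τ).continuousAt
  set C := c + 1 with hC
  have main : ∀ ε > (0:ℝ), ∀ t ∈ Set.Icc (0:ℝ) T, ∀ i,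
      0 < z t i + ε * Real.exp (C * t) := by
    intro ε hε
    by_contra hbad
    push_neg at hbad
    obtain ⟨t₁, ht₁, i₁, hi₁⟩ := hbad
    set u : ι → ℝ → ℝ := fun i τ => z τ i + ε * Real.exp (C * τ) with hu
    have hucont : ∀ i, Continuous (u i) := fun i =>
      (hcont i).add (continuous_const.mul (Real.continuous_exp.comp (continuous_const.mul continuous_id)))
    set S : Set ℝ := (Set.Icc 0 T) ∩ ⋃ i, {τ | u i τ ≤ 0} with hS
    have hSne : S.Nonempty := ⟨t₁, ht₁, Set.mem_iUnion.mpr ⟨i₁, hi₁⟩⟩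
    have hSclosed : IsClosed S :=
      isClosed_Icc.inter (isClosed_iUnion_of_finite fun i =>
        isClosed_le (hucont i) continuous_const)
    have hSbdd : BddBelow S := ⟨0, fun τ hτ => hτ.1.1⟩
    set t₀ := sInf S with ht₀
    have htS : t₀ ∈ S := hSclosed.csInf_mem hSne hSbdd
    obtain ⟨⟨ht₀0, ht₀T⟩, hmem⟩ := htS
    obtain ⟨i, hui⟩ := Set.mem_iUnion.mp hmem
    have hu0 : ∀ j, 0 < u j 0 := by
      intro j
      have := h0 j
      simp only [hu, mul_zero, Real.exp_zero, mul_one]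
      linarith
    have ht₀pos : 0 < t₀ := by
      rcases lt_or_eq_of_le ht₀0 with h | h
      · exact h
      · exfalso; have := hu0 i; rw [← h] at hui; simp at hui; linarith [hui]
    have hbefore : ∀ τ, 0 ≤ τ → τ < t₀ → ∀ j, 0 < u j τ := by
      intro τ hτ0 hτlt j
      by_contra h
      push_neg at h
      have : τ ∈ S := ⟨⟨hτ0, le_trans (le_of_lt hτlt) ht₀T⟩, Set.mem_iUnion.mpr ⟨j, h⟩⟩
      exact absurd (csInf_le hSbdd this) (not_le.mpr hτlt)
    have hge : ∀ j, 0 ≤ u j t₀ := by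
      intro j
      have htend : Tendsto (u j) (𝓝[<] t₀) (𝓝 (u j t₀)) :=
        ((hucont j).continuousAt).continuousWithinAt.tendsto
      refine ge_of_tendsto htend ?_
      filter_upwards [Ioo_mem_nhdsLT_of_mem (show t₀ ∈ Set.Ioc 0 t₀ from ⟨ht₀pos, le_refl _⟩)]
        with τ hτ
      exact le_of_lt (hbefore τ (le_of_lt hτ.1) hτ.2 j)
    have huit : u i t₀ = 0 := le_antisymm hui (hge i)
    set a := ε * Real.exp (C * t₀) with ha
    have hapos : 0 < a := mul_pos hε (Real.exp_pos _)
    have hzi : z t₀ i = -a := by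
      have : z t₀ i + a = 0 := huit
      linarith
    have hzj : ∀ j, -a ≤ z t₀ j := by
      intro j; have := hge j
      simp only [hu] at this; linarith
    have hk := key t₀ ⟨ht₀0, ht₀T⟩ i a hapos hzi hzj
    have hu' : HasDerivAt (u i) (z' t₀ i + ε * (C * Real.exp (C * t₀))) t₀ := by
      have h1 : HasDerivAt (fun τ : ℝ => C * τ) C t₀ := by
        simpa using (hasDerivAt_id t₀).const_mul C
      have h2 : HasDerivAt (fun τ : ℝ => Real.exp (C * τ)) (Real.exp (C * t₀) * C) t₀ :=
        h1.exp
      have := (hz i t₀).add ((h2.const_mul ε))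
      have harr : ε * (Real.exp (C * t₀) * C) = ε * (C * Real.exp (C * t₀)) := by ring
      rw [hu]; rw [← harr] at *; exact this
    have hu'pos : 0 < z' t₀ i + ε * (C * Real.exp (C * t₀)) := by
      have : ε * (C * Real.exp (C * t₀)) = C * a := by ring
      rw [this, hC]
      nlinarith
    have hslope : Tendsto (slope (u i) t₀) (𝓝[≠] t₀) (𝓝 (z' t₀ i + ε * (C * Real.exp (C * t₀)))) :=
      hasDerivAt_iff_tendsto_slope.mp hu'
    have hslope' : Tendsto (slope (u i) t₀) (𝓝[<] t₀) (𝓝 (z' t₀ i + ε * (C * Real.exp (C * t₀)))) :=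
      hslope.mono_left (nhdsWithin_mono _ fun τ hτ => ne_of_lt hτ)
    have hev : ∀ᶠ τ in 𝓝[<] t₀, 0 < slope (u i) t₀ τ :=
      hslope'.eventually (eventually_gt_nhds hu'pos)
    have hev2 : ∀ᶠ τ in 𝓝[<] t₀, τ ∈ Set.Ioo 0 t₀ :=
      Ioo_mem_nhdsLT_of_mem ⟨ht₀pos, le_refl _⟩
    obtain ⟨τ, hτs, hτm⟩ := (hev.and hev2).exists
    have hneg : u i τ < 0 := by
      have hd : τ - t₀ < 0 := by linarith [hτm.2]
      have : slope (u i) t₀ τ = (u i τ - u i t₀) / (τ - t₀) := by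
        simp [slope_def_field]
      rw [this, huit, sub_zero] at hτs
      rcases div_pos_iff.mp hτs with ⟨h1, h2⟩ | ⟨h1, h2⟩
      · linarith
      · exact h1
    exact absurd (hbefore τ (le_of_lt hτm.1) hτm.2 i) (not_lt.mpr (le_of_lt hneg))
  intro t ht i
  by_contra hneg
  push_neg at hneg
  set E := Real.exp (C * t) with hE
  have hEpos : 0 < E := Real.exp_pos _
  have hεpos : 0 < -z t i / (2 * E) := div_pos (by linarith) (by positivity)
  have := main (-z t i / (2 * E)) hεpos t ht i
  have heq : -z t i / (2 * E) * E = -z t i / 2 := by field_simp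
  rw [heq] at this
  linarith

end helper

/-- positivity/invariance of the multilayer SIR model. -/
theorem multilayer_sir_invariance (n m : ℕ)
    (β : Fin n → Fin n → ℝ) (βw : Fin n → Fin m → ℝ)
    (c : Fin n → Fin m → ℝ) (α : Fin m → Fin m → ℝ)
    (γ : Fin n → ℝ) (γw : Fin m → ℝ)
    (hβ : ∀ i j, 0 ≤ β i j) (hβw : ∀ i j, 0 ≤ βw i j)
    (hc : ∀ k j, 0 ≤ c k j) (hα : ∀ k j, 0 ≤ α k j)
    (hγ : ∀ i, 0 < γ i) (hd : ∀ j, 0 < γw j - α j j + ∑ k, α k j)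
    (s x : ℝ → Fin n → ℝ) (w : ℝ → Fin m → ℝ)
    (hs : ∀ i t, HasDerivAt (fun τ => s τ i)
      (-(s t i) * ((∑ j, β i j * x t j) + ∑ j, βw i j * w t j)) t)
    (hx : ∀ i t, HasDerivAt (fun τ => x τ i)
      ((s t i) * ((∑ j, β i j * x t j) + ∑ j, βw i j * w t j) - γ i * x t i) t)
    (hw : ∀ j t, HasDerivAt (fun τ => w τ j)
      (-(γw j) * w t j + (∑ k, α k j * w t k) - w t j * (∑ k, α j k)
        + ∑ k, c k j * x t k) t)
    (hs0 : ∀ i, s 0 i ∈ Set.Icc (0:ℝ) 1) (hx0 : ∀ i, x 0 i ∈ Set.Icc (0:ℝ) 1)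
    (hsx0 : ∀ i, s 0 i + x 0 i ≤ 1) (hw0 : ∀ j, 0 ≤ w 0 j) :
    ∀ t, 0 ≤ t →
      (∀ i, x t i ∈ Set.Icc (0:ℝ) 1 ∧ s t i ∈ Set.Icc (0:ℝ) 1 ∧ s t i + x t i ≤ 1) ∧
      (∀ j, 0 ≤ w t j) := by
  -- continuity of components
  have hxc : ∀ i, Continuous fun τ => x τ i := fun i =>
    continuous_iff_continuousAt.mpr fun τ => (hx i τ).continuousAt
  have hwc : ∀ j, Continuous fun τ => w τ j := fun j =>
    continuous_iff_continuousAt.mpr fun τ => (hw j τ).continuousAt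
  have hsc : ∀ i, Continuous fun τ => s τ i := fun i =>
    continuous_iff_continuousAt.mpr fun τ => (hs i τ).continuousAt
  -- Step A : s is nonnegative everywhere
  have hs_nonneg : ∀ t i, 0 ≤ s t i := by
    intro t i
    have hfc : Continuous (fun τ => (∑ j, β i j * x τ j) + ∑ j, βw i j * w τ j) :=
      (continuous_finset_sum _ fun j _ => continuous_const.mul (hxc j)).add
        (continuous_finset_sum _ fun j _ => continuous_const.mul (hwc j))
    set F : ℝ → ℝ := fun σ =>
      ∫ σ' in (0:ℝ)..σ, ((∑ j, β i j * x σ' j) + ∑ j, βw i j * w σ' j) with hF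
    have hFd : ∀ τ : ℝ, HasDerivAt F ((∑ j, β i j * x τ j) + ∑ j, βw i j * w τ j) τ :=
      fun τ => intervalIntegral.integral_hasDerivAt_right (hfc.intervalIntegrable 0 τ)
        (hfc.stronglyMeasurableAtFilter _ _) hfc.continuousAt
    have hgd : ∀ τ : ℝ, HasDerivAt (fun σ => s σ i * Real.exp (F σ)) 0 τ := by
      intro τ
      have h2 : HasDerivAt (fun σ => Real.exp (F σ))
          (Real.exp (F τ) * ((∑ j, β i j * x τ j) + ∑ j, βw i j * w τ j)) τ := (hFd τ).exp
      have h3 := (hs i τ).mul h2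
      have e0 : -s τ i * ((∑ j, β i j * x τ j) + ∑ j, βw i j * w τ j) * Real.exp (F τ)
          + s τ i * (Real.exp (F τ) * ((∑ j, β i j * x τ j) + ∑ j, βw i j * w τ j)) = 0 := by
        ring
      rw [e0] at h3
      exact h3
    have hconst : s t i * Real.exp (F t) = s 0 i * Real.exp (F 0) :=
      is_const_of_deriv_eq_zero (fun τ => (hgd τ).differentiableAt)
        (fun τ => (hgd τ).deriv) t 0
    have hF0 : F 0 = 0 := intervalIntegral.integral_same
    rw [hF0, Real.exp_zero, mul_one] at hconst
    have h1 := (hs0 i).1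
    nlinarith [Real.exp_pos (F t), hconst]
  intro t ht
  -- Step B : nonnegativity of x and w on [0, t]
  -- bound on s
  obtain ⟨B, hB0, hB⟩ : ∃ B : ℝ, 0 ≤ B ∧ ∀ τ ∈ Set.Icc (0:ℝ) t, ∀ i, s τ i ≤ B := by
    obtain ⟨B₀, hB₀⟩ := (isCompact_Icc : IsCompact (Set.Icc (0:ℝ) t)).exists_bound_of_continuousOn
      (Continuous.continuousOn (continuous_finset_sum Finset.univ fun i _ => (hsc i).abs))
    refine ⟨max B₀ 0, le_max_right _ _, fun τ hτ i => ?_⟩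
    have h1 : s τ i ≤ |s τ i| := le_abs_self _
    have h2 : |s τ i| ≤ ∑ j, |s τ j| :=
      Finset.single_le_sum (fun j _ => abs_nonneg (s τ j)) (Finset.mem_univ i)
    have h3 : (∑ j, |s τ j|) ≤ ‖∑ j, |s τ j|‖ := le_abs_self _
    have h4 := hB₀ τ hτ
    calc s τ i ≤ ‖∑ j, |s τ j|‖ := by linarith
    _ ≤ B₀ := h4
    _ ≤ max B₀ 0 := le_max_left _ _
  set K : ℝ := (∑ i, ∑ j, β i j) + ∑ i, ∑ j, βw i j with hK
  set D : ℝ := (∑ j, |γw j|) + (∑ j, ∑ k, α k j) + (∑ j, ∑ k, c k j) with hD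
  have hKnn : 0 ≤ K := by
    apply add_nonneg <;> apply Finset.sum_nonneg <;> intro i _ <;>
      apply Finset.sum_nonneg <;> intro j _
    exacts [hβ i j, hβw i j]
  have hDnn : 0 ≤ D := by
    have a1 : (0:ℝ) ≤ ∑ j, |γw j| := Finset.sum_nonneg fun j _ => abs_nonneg _
    have a2 : (0:ℝ) ≤ ∑ j, ∑ k, α k j :=
      Finset.sum_nonneg fun j _ => Finset.sum_nonneg fun k _ => hα k j
    have a3 : (0:ℝ) ≤ ∑ j, ∑ k, c k j :=
      Finset.sum_nonneg fun j _ => Finset.sum_nonneg fun k _ => hc k j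
    linarith
  set cc : ℝ := B * K + D with hcc
  set z : ℝ → (Fin n ⊕ Fin m) → ℝ := fun τ => Sum.elim (x τ) (w τ) with hzdef
  set z' : ℝ → (Fin n ⊕ Fin m) → ℝ := fun τ => Sum.elim
    (fun i => s τ i * ((∑ j, β i j * x τ j) + ∑ j, βw i j * w τ j) - γ i * x τ i)
    (fun j => -(γw j) * w τ j + (∑ k, α k j * w τ k) - w τ j * (∑ k, α j k)
      + ∑ k, c k j * x τ k) with hz'def
  have hzD : ∀ i τ, HasDerivAt (fun σ => z σ i) (z' τ i) τ := by
    intro i τ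
    cases i with
    | inl i => exact hx i τ
    | inr j => exact hw j τ
  have hkey : ∀ τ ∈ Set.Icc (0:ℝ) t, ∀ i, ∀ a : ℝ, 0 < a → z τ i = -a →
      (∀ j, -a ≤ z τ j) → -(cc * a) ≤ z' τ i := by
    intro τ hτ i a ha hzi hzj
    have hxge : ∀ j, -a ≤ x τ j := fun j => hzj (Sum.inl j)
    have hwge : ∀ j, -a ≤ w τ j := fun j => hzj (Sum.inr j)
    cases i with
    | inl i =>
      have hxi : x τ i = -a := hzi
      simp only [hz'def, Sum.elim_inl]
      have h1 : (∑ j, β i j * (-a)) ≤ ∑ j, β i j * x τ j :=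
        Finset.sum_le_sum fun j _ => mul_le_mul_of_nonneg_left (hxge j) (hβ i j)
      have h2 : (∑ j, βw i j * (-a)) ≤ ∑ j, βw i j * w τ j :=
        Finset.sum_le_sum fun j _ => mul_le_mul_of_nonneg_left (hwge j) (hβw i j)
      have e1 : (∑ j, β i j * (-a)) = -(a * ∑ j, β i j) := by
        rw [← Finset.sum_mul]; ring
      have e2 : (∑ j, βw i j * (-a)) = -(a * ∑ j, βw i j) := by
        rw [← Finset.sum_mul]; ring
      set R : ℝ := (∑ j, β i j) + (∑ j, βw i j) with hR
      have hRnn : 0 ≤ R := by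
        apply add_nonneg <;> apply Finset.sum_nonneg <;> intro j _
        exacts [hβ i j, hβw i j]
      have hRK : R ≤ K := by
        rw [hR, hK]
        have b1 : (∑ j, β i j) ≤ ∑ i', ∑ j, β i' j :=
          Finset.single_le_sum (fun i' _ => Finset.sum_nonneg fun j _ => hβ i' j)
            (Finset.mem_univ i)
        have b2 : (∑ j, βw i j) ≤ ∑ i', ∑ j, βw i' j :=
          Finset.single_le_sum (fun i' _ => Finset.sum_nonneg fun j _ => hβw i' j)
            (Finset.mem_univ i)
        linarith
      have hinner : -(a * R) ≤ (∑ j, β i j * x τ j) + ∑ j, βw i j * w τ j := by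
        rw [hR]; rw [e1] at h1; rw [e2] at h2; linarith only [h1, h2]
      have hsnn := hs_nonneg τ i
      have hsB := hB τ hτ i
      have step1 : s τ i * (-(a * R)) ≤ s τ i * ((∑ j, β i j * x τ j) + ∑ j, βw i j * w τ j) :=
        mul_le_mul_of_nonneg_left hinner hsnn
      have haR : 0 ≤ a * R := mul_nonneg (le_of_lt ha) hRnn
      have step2 : -(B * (a * R)) ≤ s τ i * (-(a * R)) := by
        have h := mul_le_mul_of_nonneg_right hsB haR
        linarith only [h]
      have step3 : -(B * (a * K)) ≤ -(B * (a * R)) := by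
        have h := mul_nonneg (mul_nonneg hB0 ha.le) (sub_nonneg.mpr hRK)
        linarith only [h]
      have hγterm : γ i * x τ i ≤ 0 := by
        rw [hxi]
        have h := mul_nonneg (hγ i).le ha.le
        linarith only [h]
      have hDa : 0 ≤ D * a := mul_nonneg hDnn ha.le
      rw [hcc]
      linarith only [step1, step2, step3, hγterm, hDa]
    | inr j =>
      have hwj : w τ j = -a := hzi
      simp only [hz'def, Sum.elim_inr]
      have h1 : (∑ k, α k j * (-a)) ≤ ∑ k, α k j * w τ k :=
        Finset.sum_le_sum fun k _ => mul_le_mul_of_nonneg_left (hwge k) (hα k j)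
      have h2 : (∑ k, c k j * (-a)) ≤ ∑ k, c k j * x τ k :=
        Finset.sum_le_sum fun k _ => mul_le_mul_of_nonneg_left (hxge k) (hc k j)
      have e1 : (∑ k, α k j * (-a)) = -(a * ∑ k, α k j) := by
        rw [← Finset.sum_mul]; ring
      have e2 : (∑ k, c k j * (-a)) = -(a * ∑ k, c k j) := by
        rw [← Finset.sum_mul]; ring
      rw [e1] at h1; rw [e2] at h2
      rw [hwj]
      have hs1 : 0 ≤ a * ∑ k, α j k :=
        mul_nonneg ha.le (Finset.sum_nonneg fun k _ => hα j k)
      -- row sums bounded by D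
      have b1 : |γw j| ≤ ∑ j', |γw j'| :=
        Finset.single_le_sum (f := fun j' => |γw j'|) (fun j' _ => abs_nonneg _)
          (Finset.mem_univ j)
      have b2 : (∑ k, α k j) ≤ ∑ j', ∑ k, α k j' :=
        Finset.single_le_sum (fun j' _ => Finset.sum_nonneg fun k _ => hα k j')
          (Finset.mem_univ j)
      have b3 : (∑ k, c k j) ≤ ∑ j', ∑ k, c k j' :=
        Finset.single_le_sum (fun j' _ => Finset.sum_nonneg fun k _ => hc k j')
          (Finset.mem_univ j)
      have hrowD : |γw j| + (∑ k, α k j) + (∑ k, c k j) ≤ D := by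
        rw [hD]; linarith
      have habs : -|γw j| * a ≤ γw j * a :=
        mul_le_mul_of_nonneg_right (neg_abs_le _) ha.le
      have hprod : 0 ≤ a * (D - (|γw j| + (∑ k, α k j) + (∑ k, c k j))) :=
        mul_nonneg ha.le (by linarith only [hrowD])
      have hprod2 : 0 ≤ a * (B * K) := mul_nonneg ha.le (mul_nonneg hB0 hKnn)
      rw [hcc]
      linarith only [h1, h2, hs1, habs, hprod, hprod2]
  have h0 : ∀ i, 0 ≤ z 0 i := by
    intro i
    cases i with
    | inl i => exact (hx0 i).1
    | inr j => exact hw0 j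
  have hzn := quasipos_nonneg z z' hzD t cc hkey h0
  have hxnn : ∀ τ ∈ Set.Icc (0:ℝ) t, ∀ i, 0 ≤ x τ i := fun τ hτ i => hzn τ hτ (Sum.inl i)
  have hwnn : ∀ τ ∈ Set.Icc (0:ℝ) t, ∀ j, 0 ≤ w τ j := fun τ hτ j => hzn τ hτ (Sum.inr j)
  -- Step C : s + x is antitone on [0, t]
  have hsx_le : ∀ i, s t i + x t i ≤ 1 := by
    intro i
    have hgd : ∀ τ : ℝ, HasDerivAt (fun σ => s σ i + x σ i) (-(γ i * x τ i)) τ := by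
      intro τ
      have h3 := (hs i τ).add (hx i τ)
      have e0 : -s τ i * ((∑ j, β i j * x τ j) + ∑ j, βw i j * w τ j)
          + (s τ i * ((∑ j, β i j * x τ j) + ∑ j, βw i j * w τ j) - γ i * x τ i)
          = -(γ i * x τ i) := by ring
      rw [e0] at h3
      exact h3
    have hanti : AntitoneOn (fun σ => s σ i + x σ i) (Set.Icc 0 t) := by
      apply antitoneOn_of_deriv_nonpos (convex_Icc 0 t)
      · exact ((hsc i).add (hxc i)).continuousOn
      · intro τ hτ
        exact ((hgd τ).differentiableAt).differentiableWithinAt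
      · intro τ hτ
        rw [(hgd τ).deriv]
        rw [interior_Icc] at hτ
        have hxτ := hxnn τ ⟨hτ.1.le, hτ.2.le⟩ i
        nlinarith [(hγ i).le]
    have := hanti (Set.left_mem_Icc.mpr ht) (Set.right_mem_Icc.mpr ht) ht
    have h01 := hsx0 i
    simpa using le_trans this h01
  have htmem : t ∈ Set.Icc (0:ℝ) t := Set.right_mem_Icc.mpr ht
  refine ⟨fun i => ?_, fun j => hwnn t htmem j⟩
  have hxi := hxnn t htmem i
  have hsi := hs_nonneg t i
  have hsx := hsx_le i
  exact ⟨⟨hxi, by linarith⟩, ⟨hsi, by linarith⟩, hsx⟩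
end

section
/- Under the irreducibility and positivity assumptions on the parameters and assuming γ^w_j > 0 for all resource nodes j, every equilibrium (s*, x*, w*) of the multilayer SIR system satisfies x* = 0 and w* = 0; that is, all equilibria are healthy equilibria of the form (s*, 0, 0) with s* ∈ [0,1]^n, and no endemic equilibrium with x* ≠ 0 or w* ≠ 0 exists. -/
open Matrix BigOperators Set

/-- all equilibria of the multilayer SIR model are healthy. -/
theorem equilibria_are_healthy (n m : ℕ)
    (B : Matrix (Fin n) (Fin n) ℝ) (Bw : Matrix (Fin n) (Fin m) ℝ)
    (Cw : Matrix (Fin m) (Fin n) ℝ) (α : Fin m → Fin m → ℝ)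
    (γ : Fin n → ℝ) (γw : Fin m → ℝ)
    (hB : ∀ i j, 0 ≤ B i j) (hBirr : Irred B)
    (hBw : ∀ i j, 0 ≤ Bw i j) (hBw1 : ∀ i, ∃ j, 0 < Bw i j)
    (hCw : ∀ k j, 0 ≤ Cw k j) (hCw1 : ∀ j, ∃ k, 0 < Cw j k)
    (hα : ∀ k j, 0 ≤ α k j)
    (Aw : Matrix (Fin m) (Fin m) ℝ)
    (hAw : ∀ j k, Aw j k = if j = k then α j j - ∑ l, α l j else α k j)
    (hAirr : Irred (Matrix.of fun j k : Fin m => if j = k then 0 else α k j))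
    (hγ : ∀ i, 0 < γ i) (hγw : ∀ j, 0 < γw j)
    (s x : Fin n → ℝ) (w : Fin m → ℝ)
    (hs : ∀ i, s i ∈ Set.Icc (0:ℝ) 1) (hx : ∀ i, x i ∈ Set.Icc (0:ℝ) 1)
    (hw : ∀ j, 0 ≤ w j)
    -- equilibrium equations: all time derivatives vanish
    (heq_s : ∀ i, -(s i) * ((B.mulVec x + Bw.mulVec w) i) = 0)
    (heq_x : ∀ i, (s i) * ((B.mulVec x + Bw.mulVec w) i) - γ i * x i = 0)
    (heq_w : (-(Matrix.diagonal γw) + Aw).mulVec w + Cw.mulVec x = 0) :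
    x = 0 ∧ w = 0 := by
  have hx0 : ∀ i, x i = 0 := by
    intro i
    have h1 := heq_s i
    have h2 := heq_x i
    rw [neg_mul] at h1
    have h3 : s i * (B.mulVec x + Bw.mulVec w) i = 0 := neg_eq_zero.mp h1
    have h4 : γ i * x i = 0 := by linarith
    rcases mul_eq_zero.mp h4 with h | h
    · exact absurd h (hγ i).ne'
    · exact h
  have hxz : x = 0 := funext hx0
  refine ⟨hxz, ?_⟩
  subst hxz
  rw [Matrix.mulVec_zero, add_zero] at heq_w
  have key : ∀ k, w k = 0 := by
    rcases isEmpty_or_nonempty (Fin m) with hm | hm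
    · intro k; exact hm.elim k
    · obtain ⟨j, -, hjmax⟩ := Finset.exists_max_image Finset.univ w
        ⟨Classical.arbitrary _, Finset.mem_univ _⟩
      have hj0 : ((-(Matrix.diagonal γw) + Aw).mulVec w) j = 0 := congrFun heq_w j
      have expand : -(γw j * w j) + ∑ k, Aw j k * w k = 0 := by
        rw [Matrix.mulVec, dotProduct] at hj0
        rw [← hj0]
        simp only [Matrix.add_apply, Matrix.neg_apply, Matrix.diagonal_apply, add_mul, neg_mul]
        rw [Finset.sum_add_distrib]
        congr 1
        simp [ite_mul, Finset.sum_ite_eq]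
      have hsplit : ∑ k, Aw j k * w k
          = (α j j - ∑ l, α l j) * w j + ∑ k ∈ Finset.univ.erase j, α k j * w k := by
        rw [← Finset.add_sum_erase Finset.univ _ (Finset.mem_univ j), hAw j j, if_pos rfl]
        congr 1
        apply Finset.sum_congr rfl
        intro k hk
        rw [hAw j k, if_neg (Finset.ne_of_mem_erase hk).symm]
      have hbound : ∑ k ∈ Finset.univ.erase j, α k j * w k
          ≤ (∑ k ∈ Finset.univ.erase j, α k j) * w j := by
        rw [Finset.sum_mul]
        exact Finset.sum_le_sum fun k _ =>
          mul_le_mul_of_nonneg_left (hjmax k (Finset.mem_univ k)) (hα k j)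
      have hsum : (∑ k ∈ Finset.univ.erase j, α k j) = (∑ l, α l j) - α j j := by
        rw [← Finset.add_sum_erase Finset.univ (fun l => α l j) (Finset.mem_univ j)]
        ring
      have hle : γw j * w j ≤ 0 := by
        rw [hsplit] at expand
        rw [hsum] at hbound
        nlinarith
      have hwj : w j = 0 := by
        have h1 : 0 ≤ γw j * w j := mul_nonneg (hγw j).le (hw j)
        have h2 : γw j * w j = 0 := le_antisymm hle h1
        rcases mul_eq_zero.mp h2 with h | h
        · exact absurd h (hγw j).ne'
        · exact h
      intro k
      exact le_antisymm (hwj ▸ hjmax k (Finset.mem_univ k)) (hw k)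
  exact funext key
end

section
/- Let M be a nonnegative irreducible square matrix and D a positive diagonal matrix. Then ρ(D^{-1}M) > 1 if and only if λ_max(M - D) > 0; ρ(D^{-1}M) = 1 if and only if λ_max(M - D) = 0; and ρ(D^{-1}M) < 1 if and only if λ_max(M - D) < 0, where λ_max denotes the largest real part of the eigenvalues. -/
open Matrix BigOperators Set

set_option linter.unusedSectionVars false

namespace PFProof

open Filter

attribute [local instance] Matrix.linftyOpNormedRing Matrix.linftyOpNormedAlgebra
  Matrix.linftyOpNormedSpace

variable {N : Type*} [Fintype N] [DecidableEq N]

noncomputable def cm (M : Matrix N N ℝ) : Matrix N N ℂ := M.map (Complex.ofReal ·)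

lemma cm_apply (M : Matrix N N ℝ) (i j : N) : cm M i j = (M i j : ℂ) := rfl

lemma cm_pow (M : Matrix N N ℝ) (k : ℕ) : cm (M ^ k) = (cm M) ^ k := by
  show Complex.ofRealHom.mapMatrix (M ^ k) = ((Complex.ofRealHom.mapMatrix M : Matrix N N ℂ)) ^ k
  exact map_pow _ _ _

lemma mem_spec_iff {A : Matrix N N ℂ} {μ : ℂ} :
    μ ∈ spectrum ℂ A ↔ ∃ x, x ≠ 0 ∧ A *ᵥ x = μ • x := by
  rw [spectrum.mem_iff]
  have hmv : ∀ v : N → ℂ, (algebraMap ℂ (Matrix N N ℂ) μ - A) *ᵥ v = μ • v - A *ᵥ v := by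
    intro v
    rw [Matrix.sub_mulVec]
    congr 1
    rw [Algebra.algebraMap_eq_smul_one, Matrix.smul_mulVec, Matrix.one_mulVec]
  constructor
  · intro h
    have hdet : (algebraMap ℂ (Matrix N N ℂ) μ - A).det = 0 := by
      by_contra hd
      exact h ((Matrix.isUnit_iff_isUnit_det _).2 (isUnit_iff_ne_zero.2 hd))
    obtain ⟨v, hv0, hv⟩ := (Matrix.exists_mulVec_eq_zero_iff).2 hdet
    rw [hmv v] at hv
    exact ⟨v, hv0, (sub_eq_zero.mp hv).symm⟩
  · rintro ⟨x, hx0, hx⟩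
    intro h
    have : (algebraMap ℂ (Matrix N N ℂ) μ - A) *ᵥ x = 0 := by
      rw [hmv x, hx, sub_self]
    have hdet := (Matrix.exists_mulVec_eq_zero_iff).1 ⟨x, hx0, this⟩
    exact (isUnit_iff_ne_zero.1 ((Matrix.isUnit_iff_isUnit_det _).1 h)) hdet

lemma specRad_eq (M : Matrix N N ℝ) :
    specRad M = sSup ((fun μ => ‖μ‖) '' spectrum ℂ (cm M)) := by
  unfold specRad
  congr 1
  ext r
  simp [cm, eq_comm, Set.mem_image]

lemma lamMax_eq (M : Matrix N N ℝ) :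
    lamMax M = sSup ((fun μ => μ.re) '' spectrum ℂ (cm M)) := by
  unfold lamMax
  congr 1
  ext r
  simp [cm, eq_comm, Set.mem_image]

lemma entry_pow_nonneg {M : Matrix N N ℝ} (hM : ∀ i j, 0 ≤ M i j) (k : ℕ) :
    ∀ i j, 0 ≤ (M ^ k) i j := by
  induction k with
  | zero => intro i j; by_cases h : i = j <;> simp [Matrix.one_apply, h]
  | succ k ih =>
      intro i j
      rw [pow_succ, Matrix.mul_apply]
      exact Finset.sum_nonneg fun l _ => mul_nonneg (ih i l) (hM l j)

lemma rowsum_le_norm {B : Matrix N N ℝ} (hB : ∀ i j, 0 ≤ B i j) (i : N) :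
    ∑ j, B i j ≤ ‖cm B‖ := by
  have h1 : (∑ j, ‖(cm B) i j‖₊) ≤ ‖cm B‖₊ := by
    rw [Matrix.linfty_opNNNorm_def]
    exact Finset.le_sup (f := fun i => ∑ j, ‖(cm B) i j‖₊) (Finset.mem_univ i)
  have h2 : ∑ j, B i j = ((∑ j, ‖(cm B) i j‖₊ : NNReal) : ℝ) := by
    push_cast
    refine Finset.sum_congr rfl fun j _ => ?_
    show B i j = ‖((B i j : ℂ))‖
    rw [Complex.norm_real, Real.norm_eq_abs, abs_of_nonneg (hB i j)]
  rw [h2]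
  exact_mod_cast h1

lemma mulVec_mono {M : Matrix N N ℝ} (hM : ∀ i j, 0 ≤ M i j) {u v : N → ℝ}
    (h : ∀ i, u i ≤ v i) : ∀ i, (M *ᵥ u) i ≤ (M *ᵥ v) i := fun i =>
  Finset.sum_le_sum fun j _ => mul_le_mul_of_nonneg_left (h j) (hM i j)

lemma pos_step {C : Matrix N N ℝ} (hC : ∀ i j, 0 ≤ C i j) (hdiag : ∀ i, 0 < C i i)
    {k : ℕ} {i j : N} (h : 0 < (C ^ k) i j) : 0 < (C ^ (k+1)) i j := by
  rw [pow_succ, Matrix.mul_apply]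
  refine lt_of_lt_of_le (mul_pos h (hdiag j)) ?_
  exact Finset.single_le_sum
    (fun l _ => mul_nonneg (entry_pow_nonneg hC k i l) (hC l j)) (Finset.mem_univ j)

lemma pos_mono {C : Matrix N N ℝ} (hC : ∀ i j, 0 ≤ C i j) (hdiag : ∀ i, 0 < C i i)
    {k k' : ℕ} (hkk : k ≤ k') {i j : N} (h : 0 < (C ^ k) i j) : 0 < (C ^ k') i j := by
  induction k', hkk using Nat.le_induction with
  | base => exact h
  | succ m _ ih => exact pos_step hC hdiag ih

lemma prim {C : Matrix N N ℝ} (hC : ∀ i j, 0 ≤ C i j) (hdiag : ∀ i, 0 < C i i)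
    (hirr : Irred C) : ∃ K : ℕ, ∀ i j, 0 < (C ^ K) i j := by
  classical
  refine ⟨Finset.univ.sup (fun p : N × N => Classical.choose (hirr p.1 p.2)), fun i j => ?_⟩
  have h1 := Classical.choose_spec (hirr i j)
  exact pos_mono hC hdiag
    (Finset.le_sup (f := fun p : N × N => Classical.choose (hirr p.1 p.2))
      (Finset.mem_univ (i, j))) h1

variable [Nonempty N]

lemma spec_nonempty (A : Matrix N N ℂ) : (spectrum ℂ A).Nonempty := spectrum.nonempty A

lemma specRad_attained (M : Matrix N N ℝ) :
    ∃ μ ∈ spectrum ℂ (cm M), specRad M = ‖μ‖ := by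
  rw [specRad_eq]
  have h1 : ((fun μ => ‖μ‖) '' spectrum ℂ (cm M)).Nonempty :=
    (spec_nonempty (cm M)).image _
  have h2 : ((fun μ => ‖μ‖) '' spectrum ℂ (cm M)).Finite :=
    (Matrix.finite_spectrum (cm M)).image _
  obtain ⟨μ, hμ, h⟩ := h1.csSup_mem h2
  exact ⟨μ, hμ, h.symm⟩

lemma le_specRad (M : Matrix N N ℝ) {μ : ℂ} (hμ : μ ∈ spectrum ℂ (cm M)) :
    ‖μ‖ ≤ specRad M := by
  rw [specRad_eq]
  exact le_csSup ((Matrix.finite_spectrum (cm M)).image _).bddAbove ⟨μ, hμ, rfl⟩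

lemma specRad_nonneg (M : Matrix N N ℝ) : 0 ≤ specRad M := by
  obtain ⟨μ, _, h⟩ := specRad_attained M
  rw [h]; exact norm_nonneg _

lemma lamMax_attained (M : Matrix N N ℝ) :
    ∃ μ ∈ spectrum ℂ (cm M), lamMax M = μ.re := by
  rw [lamMax_eq]
  have h1 : ((fun μ => μ.re) '' spectrum ℂ (cm M)).Nonempty :=
    (spec_nonempty (cm M)).image _
  have h2 : ((fun μ => μ.re) '' spectrum ℂ (cm M)).Finite :=
    (Matrix.finite_spectrum (cm M)).image _
  obtain ⟨μ, hμ, h⟩ := h1.csSup_mem h2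
  exact ⟨μ, hμ, h.symm⟩

lemma le_lamMax (M : Matrix N N ℝ) {μ : ℂ} (hμ : μ ∈ spectrum ℂ (cm M)) :
    μ.re ≤ lamMax M := by
  rw [lamMax_eq]
  exact le_csSup ((Matrix.finite_spectrum (cm M)).image _).bddAbove ⟨μ, hμ, rfl⟩

set_option maxHeartbeats 1000000 in
lemma subinv_le_specRad {M : Matrix N N ℝ} (hM : ∀ i j, 0 ≤ M i j)
    {y : N → ℝ} (hy : ∀ i, 0 ≤ y i) (hy0 : y ≠ 0) {t : ℝ} (ht : 0 < t)
    (hsub : ∀ i, t * y i ≤ (M *ᵥ y) i) : t ≤ specRad M := by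
  obtain ⟨i0, hi0⟩ : ∃ i, 0 < y i := by
    by_contra h
    push_neg at h
    exact hy0 (funext fun i => le_antisymm (h i) (hy i))
  set Y : ℝ := ∑ j, y j with hY
  have hYpos : 0 < Y :=
    lt_of_lt_of_le hi0 (Finset.single_le_sum (fun j _ => hy j) (Finset.mem_univ i0))
  have hyY : ∀ j, y j ≤ Y := fun j => Finset.single_le_sum (fun j _ => hy j) (Finset.mem_univ j)
  have hiter : ∀ k, ∀ i, t ^ k * y i ≤ ((M ^ k) *ᵥ y) i := by
    intro k
    induction k with
    | zero => intro i; simp [Matrix.one_mulVec]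
    | succ k ih =>
        intro i
        have h1 : ((M ^ (k+1)) *ᵥ y) i = (M *ᵥ ((M ^ k) *ᵥ y)) i := by
          rw [Matrix.mulVec_mulVec, ← pow_succ']
        have h3 : (M *ᵥ (t ^ k • y)) i ≤ (M *ᵥ ((M ^ k) *ᵥ y)) i :=
          mulVec_mono hM (fun j => ih j) i
        have h4 : (M *ᵥ (t ^ k • y)) i = t ^ k * (M *ᵥ y) i := by
          rw [Matrix.mulVec_smul]; rfl
        have h5 : t ^ (k+1) * y i ≤ t ^ k * (M *ᵥ y) i := by
          rw [pow_succ, mul_assoc]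
          exact mul_le_mul_of_nonneg_left (hsub i) (pow_nonneg (le_of_lt ht) k)
        rw [h1]
        exact le_trans (le_trans h5 (le_of_eq h4.symm)) h3
  have hnorm : ∀ k : ℕ, t ^ k * y i0 ≤ ‖(cm M) ^ k‖ * Y := by
    intro k
    refine le_trans (hiter k i0) ?_
    have h1 : ((M ^ k) *ᵥ y) i0 ≤ (∑ j, (M ^ k) i0 j) * Y := by
      rw [Finset.sum_mul]
      exact Finset.sum_le_sum fun j _ =>
        mul_le_mul_of_nonneg_left (hyY j) (entry_pow_nonneg hM k i0 j)
    refine le_trans h1 ?_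
    have h2 : ∑ j, (M ^ k) i0 j ≤ ‖(cm M) ^ k‖ := by
      rw [← cm_pow]
      exact rowsum_le_norm (entry_pow_nonneg hM k) i0
    exact mul_le_mul_of_nonneg_right h2 (le_of_lt hYpos)
  by_contra hcon
  push_neg at hcon
  set ρ := specRad M with hρ
  set t' : ℝ := (ρ + t)/2 with ht'
  have hρ0 : 0 ≤ ρ := specRad_nonneg M
  have ht'1 : ρ < t' := by rw [ht']; linarith
  have ht'2 : t' < t := by rw [ht']; linarith
  have ht'pos : 0 < t' := lt_of_le_of_lt hρ0 ht'1
  have hb : spectralRadius ℂ (cm M) ≤ ENNReal.ofReal ρ := by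
    rw [spectralRadius]
    refine iSup₂_le fun μ hμ => ?_
    rw [show ((‖μ‖₊ : NNReal) : ENNReal) = ENNReal.ofReal ‖μ‖ from (ofReal_norm μ).symm]
    exact ENNReal.ofReal_le_ofReal (by simpa using le_specRad M hμ)
  have hlt : spectralRadius ℂ (cm M) < ENNReal.ofReal t' :=
    lt_of_le_of_lt hb ((ENNReal.ofReal_lt_ofReal_iff ht'pos).2 ht'1)
  have htend := spectrum.pow_nnnorm_pow_one_div_tendsto_nhds_spectralRadius (cm M)
  have ev1 : ∀ᶠ n : ℕ in atTop,
      ((‖(cm M) ^ n‖₊ : ENNReal)) ^ (1/(n:ℝ)) < ENNReal.ofReal t' :=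
    htend.eventually_lt_const hlt
  have ev2 : ∀ᶠ n : ℕ in atTop, (t'/t)^n < y i0 / Y := by
    have h0 : |t'/t| < 1 := by
      rw [abs_of_pos (div_pos ht'pos ht)]
      exact (div_lt_one ht).2 ht'2
    exact (tendsto_pow_atTop_nhds_zero_of_abs_lt_one h0).eventually_lt_const
      (div_pos (lt_of_lt_of_le hi0 (le_refl _)) hYpos)
  obtain ⟨n, ⟨h1n, h2n⟩, hn1⟩ := ((ev1.and ev2).and (eventually_ge_atTop 1)).exists
  have hnpos : (0:ℝ) < (n:ℝ) := by exact_mod_cast Nat.lt_of_lt_of_le Nat.zero_lt_one hn1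
  have hpow := ENNReal.rpow_lt_rpow h1n hnpos
  rw [← ENNReal.rpow_mul, one_div, inv_mul_cancel₀ (ne_of_gt hnpos), ENNReal.rpow_one] at hpow
  rw [ENNReal.ofReal_rpow_of_pos ht'pos, Real.rpow_natCast] at hpow
  rw [show ((‖cm M ^ n‖₊ : NNReal) : ENNReal) = ENNReal.ofReal ‖cm M ^ n‖ from (ofReal_norm _).symm] at hpow
  have hnormlt : ‖cm M ^ n‖ < t' ^ n :=
    (ENNReal.ofReal_lt_ofReal_iff (pow_pos ht'pos n)).1 hpow
  have hlow := hnorm n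
  have hkey : t ^ n * y i0 < t' ^ n * Y :=
    lt_of_le_of_lt hlow (mul_lt_mul_of_pos_right hnormlt hYpos)
  have hx : y i0 / Y < (t'/t)^n := by
    rw [div_pow, div_lt_div_iff₀ hYpos (pow_pos ht n)]
    have := mul_comm (t ^ n) (y i0)
    linarith
  linarith

lemma mulVec_apply' (A : Matrix N N ℂ) (v : N → ℂ) (i : N) :
    (A *ᵥ v) i = ∑ j, A i j * v j := rfl

/-- Perron-Frobenius existence for a nonnegative irreducible matrix with positive diagonal. -/
lemma PF_exists {C : Matrix N N ℝ} (hC : ∀ i j, 0 ≤ C i j) (hdiag : ∀ i, 0 < C i i)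
    (hirr : Irred C) :
    ∃ z : N → ℝ, (∀ i, 0 < z i) ∧ C *ᵥ z = specRad C • z := by
  obtain ⟨μ, hμ, hμabs⟩ := specRad_attained C
  obtain ⟨x, hx0, hx⟩ := mem_spec_iff.1 hμ
  set ρ := specRad C with hρdef
  set y : N → ℝ := fun i => ‖x i‖ with hy
  have hynn : ∀ i, 0 ≤ y i := fun i => norm_nonneg _
  obtain ⟨j0, hj0⟩ : ∃ j, 0 < y j := by
    by_contra h
    push_neg at h
    apply hx0
    funext i
    have h2 : ‖x i‖ = 0 := le_antisymm (h i) (norm_nonneg _)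
    simpa using norm_eq_zero.1 h2
  have hy0 : y ≠ 0 := by
    intro h
    rw [h] at hj0
    exact lt_irrefl 0 hj0
  have hsub : ∀ i, ρ * y i ≤ (C *ᵥ y) i := by
    intro i
    have h1 : (cm C *ᵥ x) i = μ * x i := by rw [hx]; rfl
    have h2 : ‖(cm C *ᵥ x) i‖ ≤ (C *ᵥ y) i := by
      rw [mulVec_apply']
      refine le_trans (norm_sum_le Finset.univ (fun j => cm C i j * x j)) ?_
      refine le_of_eq (Finset.sum_congr rfl fun j _ => ?_)
      rw [cm_apply, norm_mul, Complex.norm_real, Real.norm_eq_abs, abs_of_nonneg (hC i j)]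
    have h3 : ‖(cm C *ᵥ x) i‖ = ρ * y i := by
      rw [h1, norm_mul, ← hμabs]
    rw [← h3]
    exact h2
  obtain ⟨K, hK⟩ := prim hC hdiag hirr
  by_cases hw : C *ᵥ y = ρ • y
  · -- need positivity of eigenvector: take z = C^K *ᵥ y
    refine ⟨(C ^ K) *ᵥ y, ?_, ?_⟩
    · intro i
      rw [Matrix.mulVec]
      refine lt_of_lt_of_le (mul_pos (hK i j0) hj0) ?_
      exact Finset.single_le_sum
        (fun l _ => mul_nonneg (le_of_lt (hK i l)) (hynn l)) (Finset.mem_univ j0)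
    · have hcomm : C *ᵥ ((C ^ K) *ᵥ y) = (C ^ K) *ᵥ (C *ᵥ y) := by
        rw [Matrix.mulVec_mulVec, Matrix.mulVec_mulVec, ← pow_succ', ← pow_succ]
      rw [hcomm, hw, Matrix.mulVec_smul]
  · exfalso
    set w : N → ℝ := C *ᵥ y - ρ • y with hwdef
    have hwnn : ∀ i, 0 ≤ w i := by
      intro i
      have := hsub i
      simp only [hwdef, Pi.sub_apply, Pi.smul_apply, smul_eq_mul]
      linarith
    have hwne : w ≠ 0 := by
      intro h
      exact hw (by rwa [sub_eq_zero] at h)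
    obtain ⟨l0, hl0⟩ : ∃ l, 0 < w l := by
      by_contra h
      push_neg at h
      exact hwne (funext fun i => le_antisymm (h i) (hwnn i))
    set z : N → ℝ := (C ^ K) *ᵥ y with hz
    have hzpos : ∀ i, 0 < z i := by
      intro i
      rw [hz, Matrix.mulVec]
      refine lt_of_lt_of_le (mul_pos (hK i j0) hj0) ?_
      exact Finset.single_le_sum
        (fun l _ => mul_nonneg (le_of_lt (hK i l)) (hynn l)) (Finset.mem_univ j0)
    have hCKw : ∀ i, 0 < ((C ^ K) *ᵥ w) i := by
      intro i
      rw [Matrix.mulVec]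
      refine lt_of_lt_of_le (mul_pos (hK i l0) hl0) ?_
      exact Finset.single_le_sum
        (fun l _ => mul_nonneg (le_of_lt (hK i l)) (hwnn l)) (Finset.mem_univ l0)
    have hcomm : C *ᵥ z - ρ • z = (C ^ K) *ᵥ w := by
      rw [hz, hwdef, Matrix.mulVec_sub, Matrix.mulVec_smul]
      congr 1
      rw [Matrix.mulVec_mulVec, Matrix.mulVec_mulVec, ← pow_succ', ← pow_succ]
    set T : ℝ := Finset.univ.inf' Finset.univ_nonempty (fun i => (C *ᵥ z) i / z i) with hT
    have hT1 : ∀ i, T * z i ≤ (C *ᵥ z) i := by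
      intro i
      have h1 : T ≤ (C *ᵥ z) i / z i :=
        Finset.inf'_le _ (Finset.mem_univ i)
      exact (le_div_iff₀ (hzpos i)).1 h1
    have hT2 : ρ < T := by
      obtain ⟨i, _, hi⟩ := Finset.exists_mem_eq_inf' Finset.univ_nonempty
        (fun i => (C *ᵥ z) i / z i)
      rw [hT, hi, lt_div_iff₀ (hzpos i)]
      have h1 : (C *ᵥ z) i - ρ * z i = ((C ^ K) *ᵥ w) i := by
        have := congrFun hcomm i
        simpa using this
      have h2 := hCKw i
      linarith
    have hTpos : 0 < T := lt_of_le_of_lt (specRad_nonneg C) hT2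
    have hfin := subinv_le_specRad hC (fun i => le_of_lt (hzpos i))
      (fun h => lt_irrefl (0:ℝ) (by rw [h] at hzpos; simpa using hzpos (Classical.arbitrary N)))
      hTpos hT1
    rw [← hρdef] at hfin
    linarith

lemma eig_sum_B {M : Matrix N N ℝ} {d : N → ℝ} {x : N → ℂ} {μ : ℂ}
    (hx : cm (M - Matrix.diagonal d) *ᵥ x = μ • x) (i : N) :
    ∑ j, (M i j : ℂ) * x j = ((d i : ℂ) + μ) * x i := by
  have h := congrFun hx i
  rw [mulVec_apply'] at h
  have hsplit : ∀ j, cm (M - Matrix.diagonal d) i j * x j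
      = (M i j : ℂ) * x j - ((Matrix.diagonal d i j : ℝ) : ℂ) * x j := by
    intro j
    rw [cm_apply]
    push_cast [Matrix.sub_apply]
    ring
  rw [Finset.sum_congr rfl (fun j _ => hsplit j), Finset.sum_sub_distrib] at h
  have hdiagsum : ∑ j, ((Matrix.diagonal d i j : ℝ) : ℂ) * x j = (d i : ℂ) * x i := by
    rw [Finset.sum_eq_single i]
    · rw [Matrix.diagonal_apply_eq]
    · intro j _ hj
      rw [Matrix.diagonal_apply_ne' d hj]
      norm_num
    · intro h; exact absurd (Finset.mem_univ i) h
  rw [hdiagsum] at h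
  have h2 : (μ • x) i = μ * x i := rfl
  rw [h2] at h
  linear_combination h

lemma eig_sum_A {M : Matrix N N ℝ} {d : N → ℝ} {x : N → ℂ} {μ : ℂ} (hd : ∀ i, 0 < d i)
    (hx : cm (Matrix.diagonal (fun i => (d i)⁻¹) * M) *ᵥ x = μ • x) (i : N) :
    ∑ j, (M i j : ℂ) * x j = μ * (d i : ℂ) * x i := by
  have h := congrFun hx i
  rw [mulVec_apply'] at h
  have hsplit : ∀ j, cm (Matrix.diagonal (fun i => (d i)⁻¹) * M) i j * x j
      = (d i : ℂ)⁻¹ * ((M i j : ℂ) * x j) := by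
    intro j
    rw [cm_apply, Matrix.diagonal_mul]
    push_cast
    ring
  rw [Finset.sum_congr rfl (fun j _ => hsplit j), ← Finset.mul_sum] at h
  have h2 : (μ • x) i = μ * x i := rfl
  rw [h2] at h
  have hdne : (d i : ℂ) ≠ 0 := by
    exact_mod_cast ne_of_gt (hd i)
  rw [inv_mul_eq_iff_eq_mul₀ hdne] at h
  rw [h]; ring

lemma abs_vec_props {x : N → ℂ} (hx0 : x ≠ 0) :
    (∀ i, 0 ≤ ‖x i‖) ∧ (fun i => ‖x i‖) ≠ 0 := by
  refine ⟨fun i => norm_nonneg _, ?_⟩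
  intro h
  apply hx0
  funext i
  have h2 := congrFun h i
  simp only [Pi.zero_apply] at h2
  simpa using norm_eq_zero.1 h2

/-- L2: subinvariance for the Metzler matrix gives a lower bound on `lamMax`. -/
lemma metzler_subinv_le_lamMax {M : Matrix N N ℝ} {d : N → ℝ}
    (hM : ∀ i j, 0 ≤ M i j) (hMirr : Irred M) (hd : ∀ i, 0 < d i)
    {y : N → ℝ} (hy : ∀ i, 0 ≤ y i) (hy0 : y ≠ 0) {s : ℝ} (hs : 0 ≤ s)
    (hsub : ∀ i, s * y i ≤ ((M - Matrix.diagonal d) *ᵥ y) i) :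
    s ≤ lamMax (M - Matrix.diagonal d) := by
  classical
  set B := M - Matrix.diagonal d with hB
  set dmax : ℝ := Finset.univ.sup' Finset.univ_nonempty d with hdmax
  have hdmaxle : ∀ i, d i ≤ dmax := fun i => Finset.le_sup' d (Finset.mem_univ i)
  have hdmaxpos : 0 < dmax :=
    lt_of_lt_of_le (hd (Classical.arbitrary N)) (hdmaxle _)
  set c : ℝ := dmax + 1 with hc
  have hcpos : 0 < c := by positivity
  set C : Matrix N N ℝ := M + Matrix.diagonal (fun i => c - d i) with hCdef
  have hCB : C = B + c • (1 : Matrix N N ℝ) := by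
    ext i j
    by_cases h : i = j
    · subst h
      simp [hCdef, hB, Matrix.diagonal_apply_eq, Matrix.one_apply_eq]
      ring
    · simp [hCdef, hB, Matrix.diagonal_apply_ne _ h, Matrix.one_apply_ne h]
  have hCapp : ∀ i j, C i j = M i j + (if i = j then c - d i else 0) := by
    intro i j
    by_cases h : i = j
    · subst h; simp [hCdef, Matrix.diagonal_apply_eq]
    · simp [hCdef, Matrix.diagonal_apply_ne _ h, h]
  have hCnn : ∀ i j, 0 ≤ C i j := by
    intro i j
    rw [hCapp]
    by_cases h : i = j
    · subst h
      rw [if_pos rfl, hc]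
      have h1 := hdmaxle i
      have h2 := hM i i
      linarith
    · rw [if_neg h]
      simpa using hM i j
  have hCdiag : ∀ i, 0 < C i i := by
    intro i
    rw [hCapp, if_pos rfl, hc]
    have h1 := hdmaxle i
    have h2 := hM i i
    linarith
  have hMC : ∀ i j, M i j ≤ C i j := by
    intro i j
    rw [hCapp]
    by_cases h : i = j
    · subst h
      rw [if_pos rfl, hc]
      have h1 := hdmaxle i
      linarith
    · rw [if_neg h]
      simp
  have hpowle : ∀ k, ∀ i j, (M ^ k) i j ≤ (C ^ k) i j := by
    intro k
    induction k with
    | zero => intro i j; rw [pow_zero, pow_zero]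
    | succ k ih =>
        intro i j
        rw [pow_succ, pow_succ, Matrix.mul_apply, Matrix.mul_apply]
        refine Finset.sum_le_sum fun l _ => ?_
        exact mul_le_mul (ih i l) (hMC l j) (hM l j)
          (le_trans (entry_pow_nonneg hM k i l) (ih i l))
  have hCirr : Irred C := by
    intro i j
    obtain ⟨k, hk⟩ := hMirr i j
    exact ⟨k, lt_of_lt_of_le hk (hpowle k i j)⟩
  have hCy : ∀ i, (s + c) * y i ≤ (C *ᵥ y) i := by
    intro i
    have h1 : (C *ᵥ y) i = (B *ᵥ y) i + c * y i := by
      rw [hCB, Matrix.add_mulVec, Matrix.smul_mulVec, Matrix.one_mulVec]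
      rfl
    rw [h1]
    have := hsub i
    linarith
  have hsc : 0 < s + c := by linarith
  have hρC : s + c ≤ specRad C := subinv_le_specRad hCnn hy hy0 hsc hCy
  obtain ⟨z, hzpos, hz⟩ := PF_exists hCnn hCdiag hCirr
  have hBz : B *ᵥ z = (specRad C - c) • z := by
    have h1 : C *ᵥ z = B *ᵥ z + c • z := by
      rw [hCB, Matrix.add_mulVec, Matrix.smul_mulVec, Matrix.one_mulVec]
    funext i
    have h2 := congrFun hz i
    rw [h1] at h2
    simp only [Pi.add_apply, Pi.smul_apply, Pi.sub_apply, smul_eq_mul] at h2 ⊢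
    linarith [h2]
  set xz : N → ℂ := fun i => ((z i : ℝ) : ℂ) with hxz
  have hxz0 : xz ≠ 0 := by
    intro h
    have h2 := congrFun h (Classical.arbitrary N)
    simp only [hxz, Pi.zero_apply, Complex.ofReal_eq_zero] at h2
    exact ne_of_gt (hzpos (Classical.arbitrary N)) h2
  have heig : cm B *ᵥ xz = (((specRad C - c : ℝ)) : ℂ) • xz := by
    funext i
    rw [mulVec_apply']
    have h1 : ∀ j, cm B i j * xz j = ((B i j * z j : ℝ) : ℂ) := by
      intro j
      rw [cm_apply]
      push_cast
      rfl
    rw [Finset.sum_congr rfl fun j _ => h1 j, ← Complex.ofReal_sum]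
    have h2 := congrFun hBz i
    simp only [Pi.smul_apply, smul_eq_mul] at h2
    have h3 : ∑ j, B i j * z j = (B *ᵥ z) i := rfl
    rw [h3, h2]
    push_cast
    rfl
  have hmem : (((specRad C - c : ℝ)) : ℂ) ∈ spectrum ℂ (cm B) :=
    mem_spec_iff.2 ⟨xz, hxz0, heig⟩
  have hle := le_lamMax B hmem
  rw [Complex.ofReal_re] at hle
  linarith

lemma diag_inv {d : N → ℝ} (hd : ∀ i, 0 < d i) :
    (Matrix.diagonal d)⁻¹ = Matrix.diagonal (fun i => (d i)⁻¹) := by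
  apply Matrix.inv_eq_right_inv
  rw [Matrix.diagonal_mul_diagonal]
  have h : (fun i => d i * (d i)⁻¹) = fun _ : N => (1:ℝ) :=
    funext fun i => mul_inv_cancel₀ (ne_of_gt (hd i))
  rw [h, Matrix.diagonal_one]

lemma lam_to_rho {M : Matrix N N ℝ} {d : N → ℝ} (hM : ∀ i j, 0 ≤ M i j)
    (hd : ∀ i, 0 < d i) (hlam : 0 ≤ lamMax (M - Matrix.diagonal d)) :
    1 + lamMax (M - Matrix.diagonal d) / (Finset.univ.sup' Finset.univ_nonempty d)
      ≤ specRad ((Matrix.diagonal d)⁻¹ * M) := by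
  classical
  set dmax : ℝ := Finset.univ.sup' Finset.univ_nonempty d with hdmax
  have hdmaxle : ∀ i, d i ≤ dmax := fun i => Finset.le_sup' d (Finset.mem_univ i)
  have hdmaxpos : 0 < dmax := lt_of_lt_of_le (hd (Classical.arbitrary N)) (hdmaxle _)
  rw [diag_inv hd]
  set A := Matrix.diagonal (fun i => (d i)⁻¹) * M with hA
  have hAapp : ∀ i j, A i j = (d i)⁻¹ * M i j := by
    intro i j; rw [hA, Matrix.diagonal_mul]
  have hAnn : ∀ i j, 0 ≤ A i j := fun i j => by
    rw [hAapp]; exact mul_nonneg (inv_nonneg.2 (le_of_lt (hd i))) (hM i j)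
  obtain ⟨μ, hμ, hre⟩ := lamMax_attained (M - Matrix.diagonal d)
  obtain ⟨x, hx0, hx⟩ := mem_spec_iff.1 hμ
  obtain ⟨hynn, hy0⟩ := abs_vec_props hx0
  set y : N → ℝ := fun i => ‖x i‖ with hydef
  have hμre : 0 ≤ μ.re := by rw [← hre]; exact hlam
  have hkey : ∀ i, (d i + μ.re) * y i ≤ ∑ j, M i j * y j := by
    intro i
    have h1 := eig_sum_B hx i
    have h2 : ‖∑ j, (M i j : ℂ) * x j‖ ≤ ∑ j, M i j * y j := by
      refine le_trans (norm_sum_le _ _) (le_of_eq ?_)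
      refine Finset.sum_congr rfl fun j _ => ?_
      rw [norm_mul, Complex.norm_real, Real.norm_eq_abs, abs_of_nonneg (hM i j)]
    have h3 : (d i + μ.re) * y i ≤ ‖∑ j, (M i j : ℂ) * x j‖ := by
      rw [h1, norm_mul]
      have h4 : d i + μ.re ≤ ‖(d i : ℂ) + μ‖ := by
        have h5 := Complex.re_le_norm ((d i : ℂ) + μ)
        simpa using h5
      exact mul_le_mul_of_nonneg_right h4 (hynn i)
    exact le_trans h3 h2
  set t : ℝ := 1 + μ.re / dmax with htdef
  have htpos : 0 < t := by
    have : 0 ≤ μ.re / dmax := div_nonneg hμre (le_of_lt hdmaxpos)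
    rw [htdef]; linarith
  have hsub : ∀ i, t * y i ≤ (A *ᵥ y) i := by
    intro i
    have hAy : (A *ᵥ y) i = (d i)⁻¹ * ∑ j, M i j * y j := by
      have h0 : (A *ᵥ y) i = ∑ j, A i j * y j := rfl
      rw [h0, Finset.mul_sum]
      refine Finset.sum_congr rfl fun j _ => ?_
      rw [hAapp]; ring
    rw [hAy]
    have h5 : t * y i ≤ (d i)⁻¹ * ((d i + μ.re) * y i) := by
      have h6 : (d i)⁻¹ * ((d i + μ.re) * y i) = (1 + μ.re / d i) * y i := by
        have hdne : d i ≠ 0 := ne_of_gt (hd i)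
        field_simp
      rw [h6]
      refine mul_le_mul_of_nonneg_right ?_ (hynn i)
      have h7 : μ.re / dmax ≤ μ.re / d i := by
        gcongr
        · exact hd i
        · exact hdmaxle i
      rw [htdef]; linarith
    exact le_trans h5 (mul_le_mul_of_nonneg_left (hkey i) (inv_nonneg.2 (le_of_lt (hd i))))
  have hfin := subinv_le_specRad hAnn hynn hy0 htpos hsub
  rw [htdef, ← hre] at hfin
  exact hfin

lemma rho_to_lam {M : Matrix N N ℝ} {d : N → ℝ} (hM : ∀ i j, 0 ≤ M i j)
    (hMirr : Irred M) (hd : ∀ i, 0 < d i)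
    (hrho : 1 ≤ specRad ((Matrix.diagonal d)⁻¹ * M)) :
    (specRad ((Matrix.diagonal d)⁻¹ * M) - 1) * (Finset.univ.inf' Finset.univ_nonempty d)
      ≤ lamMax (M - Matrix.diagonal d) := by
  classical
  set dmin : ℝ := Finset.univ.inf' Finset.univ_nonempty d with hdmin
  have hdminle : ∀ i, dmin ≤ d i := fun i => Finset.inf'_le d (Finset.mem_univ i)
  have hdminpos : 0 < dmin := by
    obtain ⟨i, _, hi⟩ := Finset.exists_mem_eq_inf' Finset.univ_nonempty d
    rw [hdmin, hi]; exact hd i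
  rw [diag_inv hd] at hrho ⊢
  set A := Matrix.diagonal (fun i => (d i)⁻¹) * M with hA
  set ρ := specRad A with hρ
  obtain ⟨μ, hμ, habs⟩ := specRad_attained A
  obtain ⟨x, hx0, hx⟩ := mem_spec_iff.1 hμ
  obtain ⟨hynn, hy0⟩ := abs_vec_props hx0
  set y : N → ℝ := fun i => ‖x i‖ with hydef
  set s : ℝ := (ρ - 1) * dmin with hs
  have hs0 : 0 ≤ s := by
    rw [hs]; exact mul_nonneg (by linarith) (le_of_lt hdminpos)
  have hkey : ∀ i, ρ * (d i * y i) ≤ ∑ j, M i j * y j := by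
    intro i
    have h1 := eig_sum_A hd hx i
    have h2 : ‖∑ j, (M i j : ℂ) * x j‖ ≤ ∑ j, M i j * y j := by
      refine le_trans (norm_sum_le _ _) (le_of_eq ?_)
      refine Finset.sum_congr rfl fun j _ => ?_
      rw [norm_mul, Complex.norm_real, Real.norm_eq_abs, abs_of_nonneg (hM i j)]
    have h3 : ‖μ * (d i : ℂ) * x i‖ = ρ * (d i * y i) := by
      rw [norm_mul, norm_mul, Complex.norm_real, Real.norm_eq_abs,
        abs_of_nonneg (le_of_lt (hd i)), ← habs]
      ring
    rw [← h3, ← h1]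
    exact h2
  have hsub : ∀ i, s * y i ≤ ((M - Matrix.diagonal d) *ᵥ y) i := by
    intro i
    have hBy : ((M - Matrix.diagonal d) *ᵥ y) i = (∑ j, M i j * y j) - d i * y i := by
      rw [Matrix.sub_mulVec]
      simp only [Pi.sub_apply]
      congr 1
      rw [Matrix.mulVec_diagonal]
    rw [hBy]
    have h4 := hkey i
    have h5 : (ρ - 1) * (dmin * y i) ≤ (ρ - 1) * (d i * y i) :=
      mul_le_mul_of_nonneg_left
        (mul_le_mul_of_nonneg_right (hdminle i) (hynn i)) (by linarith)
    have h6 : (ρ - 1) * (d i * y i) = ρ * (d i * y i) - d i * y i := by ring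
    have h7 : s * y i = (ρ - 1) * (dmin * y i) := by rw [hs]; ring
    linarith
  exact metzler_subinv_le_lamMax hM hMirr hd hynn hy0 hs0 hsub

end PFProof

/-- threshold equivalences between ρ(D⁻¹M) and λ_max(M - D). -/
theorem spectralRadius_lambdaMax_threshold {N : Type*} [Fintype N] [DecidableEq N]
    [Nonempty N] (M : Matrix N N ℝ) (d : N → ℝ)
    (hM : ∀ i j, 0 ≤ M i j) (hMirr : Irred M) (hd : ∀ i, 0 < d i) :
    (1 < specRad ((Matrix.diagonal d)⁻¹ * M) ↔ 0 < lamMax (M - Matrix.diagonal d)) ∧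
    (specRad ((Matrix.diagonal d)⁻¹ * M) = 1 ↔ lamMax (M - Matrix.diagonal d) = 0) ∧
    (specRad ((Matrix.diagonal d)⁻¹ * M) < 1 ↔ lamMax (M - Matrix.diagonal d) < 0) := by
  classical
  set ρ := specRad ((Matrix.diagonal d)⁻¹ * M) with hρ
  set lam := lamMax (M - Matrix.diagonal d) with hlam
  have hdmaxle : ∀ i, d i ≤ Finset.univ.sup' Finset.univ_nonempty d :=
    fun i => Finset.le_sup' d (Finset.mem_univ i)
  have hdmaxpos : 0 < Finset.univ.sup' Finset.univ_nonempty d :=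
    lt_of_lt_of_le (hd (Classical.arbitrary N)) (hdmaxle _)
  have hdminpos : 0 < Finset.univ.inf' Finset.univ_nonempty d := by
    obtain ⟨i, _, hi⟩ := Finset.exists_mem_eq_inf' Finset.univ_nonempty d
    rw [hi]; exact hd i
  have a1 : 0 ≤ lam → 1 ≤ ρ := by
    intro h
    have h1 := PFProof.lam_to_rho hM hd h
    have h2 : 0 ≤ lam / Finset.univ.sup' Finset.univ_nonempty d :=
      div_nonneg h (le_of_lt hdmaxpos)
    rw [← hlam, ← hρ] at h1
    linarith
  have a2 : 0 < lam → 1 < ρ := by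
    intro h
    have h1 := PFProof.lam_to_rho hM hd (le_of_lt h)
    have h2 : 0 < lam / Finset.univ.sup' Finset.univ_nonempty d :=
      div_pos h hdmaxpos
    rw [← hlam, ← hρ] at h1
    linarith
  have a3 : 1 ≤ ρ → 0 ≤ lam := by
    intro h
    have h1 := PFProof.rho_to_lam hM hMirr hd (by rw [← hρ]; exact h)
    rw [← hρ, ← hlam] at h1
    have h2 : 0 ≤ (ρ - 1) * Finset.univ.inf' Finset.univ_nonempty d :=
      mul_nonneg (by linarith) (le_of_lt hdminpos)
    linarith
  have a4 : 1 < ρ → 0 < lam := by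
    intro h
    have h1 := PFProof.rho_to_lam hM hMirr hd (by rw [← hρ]; exact le_of_lt h)
    rw [← hρ, ← hlam] at h1
    have h2 : 0 < (ρ - 1) * Finset.univ.inf' Finset.univ_nonempty d :=
      mul_pos (by linarith) hdminpos
    linarith
  refine ⟨⟨a4, a2⟩, ?_, ?_⟩
  · constructor
    · intro h
      refine le_antisymm ?_ (a3 (le_of_eq h.symm))
      by_contra h2
      push_neg at h2
      have := a2 h2
      linarith
    · intro h
      refine le_antisymm ?_ (a1 (le_of_eq h.symm))
      by_contra h2
      push_neg at h2
      have := a4 h2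
      linarith
  · constructor
    · intro h
      by_contra h2
      push_neg at h2
      have := a1 h2
      linarith
    · intro h
      by_contra h2
      push_neg at h2
      have := a3 h2
      linarith
end

section
/- Suppose at some time τ ≥ 0 we have R(τ) < 1, and let v(τ) be the normalized left Perron eigenvector of H(s(τ))B_f - D_f. Then for all t ≥ τ, v(τ)^T z(t) ≤ v(τ)^T z(τ) e^{λ_max(τ)(t-τ)}, where λ_max(τ) < 0; in particular v(τ)^T z(t) is monotonically decreasing and converges exponentially to zero. -/
open Matrix BigOperators Set

section Aux

open Filter

attribute [local instance] Matrix.linftyOpNormedRing Matrix.linftyOpNormedAlgebra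

lemma aux_entry_le_norm {N : Type*} [Fintype N] [DecidableEq N] (M : Matrix N N ℂ) (i j : N) :
    ‖M i j‖ ≤ ‖M‖ := by
  rw [Matrix.linfty_opNorm_def]
  have h1 : ‖M i j‖₊ ≤ ∑ j', ‖M i j'‖₊ :=
    Finset.single_le_sum (f := fun j' => ‖M i j'‖₊) (fun _ _ => zero_le) (Finset.mem_univ j)
  have h2 : (∑ j', ‖M i j'‖₊) ≤ Finset.univ.sup fun i => ∑ j', ‖M i j'‖₊ :=
    Finset.le_sup (f := fun i => ∑ j', ‖M i j'‖₊) (Finset.mem_univ i)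
  exact_mod_cast h1.trans h2

lemma aux_pow_norm_tendsto_zero {N : Type*} [Fintype N] [DecidableEq N] [Nonempty N]
    (M : Matrix N N ℝ) (hR : specRad M < 1) :
    Tendsto (fun k : ℕ => ‖(M.map (Complex.ofReal ·)) ^ k‖) atTop (nhds 0) := by
  haveI : CompleteSpace (Matrix N N ℂ) := FiniteDimensional.complete ℂ _
  set Mc := M.map (Complex.ofReal ·) with hMc
  have hbdd : BddAbove {r : ℝ | ∃ μ ∈ spectrum ℂ Mc, r = ‖μ‖} := by
    refine ⟨‖Mc‖, ?_⟩
    rintro r ⟨μ, hμ, rfl⟩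
    simpa using spectrum.norm_le_norm_of_mem hμ
  have hsr : spectralRadius ℂ Mc < 1 := by
    have h1 : spectralRadius ℂ Mc ≤ ENNReal.ofReal (specRad M) := by
      rw [spectralRadius]
      refine iSup₂_le fun μ hμ => ?_
      have : ‖μ‖ ≤ specRad M := le_csSup hbdd ⟨μ, hμ, rfl⟩
      rw [← ENNReal.ofReal_coe_nnreal, coe_nnnorm]
      exact ENNReal.ofReal_le_ofReal (by simpa using this)
    exact h1.trans_lt (by simpa using ENNReal.ofReal_lt_one.2 hR)
  obtain ⟨r, hr1, hr2⟩ := ENNReal.lt_iff_exists_nnreal_btwn.1 hsr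
  have hgel := spectrum.pow_nnnorm_pow_one_div_tendsto_nhds_spectralRadius Mc
  have hev : ∀ᶠ k : ℕ in atTop, (‖Mc ^ k‖₊ : ENNReal) ^ (1/(k:ℝ)) < (r : ENNReal) :=
    hgel.eventually_lt_const hr1
  have hrlt1 : (r : ℝ) < 1 := by exact_mod_cast hr2
  have hev2 : ∀ᶠ k : ℕ in atTop, ‖Mc ^ k‖ ≤ (r : ℝ) ^ k := by
    filter_upwards [hev, eventually_ge_atTop 1] with k hk hk1
    have hk0 : (k : ℝ) ≠ 0 := by positivity
    have h3 : (‖Mc ^ k‖₊ : ENNReal) ≤ (r : ENNReal) ^ (k : ℝ) := by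
      calc (‖Mc ^ k‖₊ : ENNReal) = ((‖Mc ^ k‖₊ : ENNReal) ^ (1/(k:ℝ))) ^ (k:ℝ) := by
            rw [← ENNReal.rpow_mul, one_div, inv_mul_cancel₀ hk0, ENNReal.rpow_one]
        _ ≤ (r : ENNReal) ^ (k:ℝ) := ENNReal.rpow_le_rpow hk.le (by positivity)
    rw [ENNReal.rpow_natCast, ← ENNReal.coe_pow, ENNReal.coe_le_coe] at h3
    calc ‖Mc ^ k‖ = ((‖Mc ^ k‖₊ : NNReal) : ℝ) := rfl
      _ ≤ ((r ^ k : NNReal) : ℝ) := by exact_mod_cast h3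
      _ = (r : ℝ) ^ k := by push_cast; ring
  have hrt : Tendsto (fun k : ℕ => (r:ℝ) ^ k) atTop (nhds 0) :=
    tendsto_pow_atTop_nhds_zero_of_lt_one r.coe_nonneg hrlt1
  exact squeeze_zero' (Eventually.of_forall fun k => norm_nonneg _) hev2 hrt

/-- If `M` is entrywise nonnegative with `specRad M < 1`, there is no nonnegative
vector `w` with a positive entry satisfying `w ≤ wᵀ M` entrywise. -/
lemma aux_no_supersolution {N : Type*} [Fintype N] [DecidableEq N]
    (M : Matrix N N ℝ) (hM : ∀ i j, 0 ≤ M i j) (hR : specRad M < 1)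
    (w : N → ℝ) (hw : ∀ i, 0 ≤ w i) (j0 : N) (hj0 : 0 < w j0)
    (hle : ∀ j, w j ≤ Matrix.vecMul w M j) : False := by
  haveI : Nonempty N := ⟨j0⟩
  have hpow : ∀ k : ℕ, ∀ j, w j ≤ Matrix.vecMul w (M ^ k) j := by
    intro k
    induction k with
    | zero => intro j; simp
    | succ k ih =>
      intro j
      have hstep : Matrix.vecMul w (M ^ (k+1)) j = Matrix.vecMul (Matrix.vecMul w (M ^ k)) M j := by
        rw [pow_succ, ← Matrix.vecMul_vecMul]
      rw [hstep]
      calc w j ≤ Matrix.vecMul w M j := hle j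
        _ ≤ Matrix.vecMul (Matrix.vecMul w (M ^ k)) M j := by
            simp only [Matrix.vecMul, dotProduct]
            exact Finset.sum_le_sum fun i _ =>
              mul_le_mul_of_nonneg_right (ih i) (hM i j)
  have hub : ∀ k : ℕ, Matrix.vecMul w (M ^ k) j0 ≤
      (∑ i, w i) * ‖(M.map (Complex.ofReal ·)) ^ k‖ := by
    intro k
    have hmap : (M.map (Complex.ofReal ·)) ^ k = (M ^ k).map (Complex.ofReal ·) := by
      exact (map_pow (Complex.ofRealHom.mapMatrix) M k).symm
    have hent : ∀ i, (M ^ k) i j0 ≤ ‖(M.map (Complex.ofReal ·)) ^ k‖ := by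
      intro i
      have := aux_entry_le_norm ((M ^ k).map (Complex.ofReal ·)) i j0
      rw [← hmap] at this
      calc (M ^ k) i j0 ≤ |(M ^ k) i j0| := le_abs_self _
        _ = ‖((M ^ k).map (Complex.ofReal ·)) i j0‖ := by
            simp [Matrix.map_apply]
        _ ≤ _ := by simpa [hmap] using this
    calc Matrix.vecMul w (M ^ k) j0 = ∑ i, w i * (M ^ k) i j0 := by
          simp [Matrix.vecMul, dotProduct]
      _ ≤ ∑ i, w i * ‖(M.map (Complex.ofReal ·)) ^ k‖ :=
          Finset.sum_le_sum fun i _ => mul_le_mul_of_nonneg_left (hent i) (hw i)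
      _ = (∑ i, w i) * ‖(M.map (Complex.ofReal ·)) ^ k‖ := by rw [Finset.sum_mul]
  have htend : Tendsto (fun k : ℕ => (∑ i, w i) * ‖(M.map (Complex.ofReal ·)) ^ k‖)
      atTop (nhds 0) := by
    simpa using (aux_pow_norm_tendsto_zero M hR).const_mul (∑ i, w i)
  have hev := htend.eventually_lt_const hj0
  obtain ⟨k, hk⟩ := hev.exists
  exact absurd ((hpow k j0).trans (hub k)) (not_le.2 hk)

end Aux

/-- Corollary 1: once R(τ) < 1, the weighted average v(τ)ᵀz(t) decays
monotonically and exponentially to zero for t ≥ τ. -/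
theorem weighted_average_exponential_decay (n m : ℕ)
    (Bf : Matrix (Fin n ⊕ Fin m) (Fin n ⊕ Fin m) ℝ) (d : Fin n ⊕ Fin m → ℝ)
    (hBf : ∀ i j, 0 ≤ Bf i j) (hBfirr : Irred Bf) (hd : ∀ i, 0 < d i)
    (s : ℝ → Fin n → ℝ) (z : ℝ → (Fin n ⊕ Fin m) → ℝ)
    (hzdyn : ∀ j t, HasDerivAt (fun σ => z σ j)
      (((Matrix.fromBlocks (Matrix.diagonal (s t)) 0 0 (1 : Matrix (Fin m) (Fin m) ℝ) * Bf
          - Matrix.diagonal d).mulVec (z t)) j) t)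
    (hznn : ∀ t j, 0 ≤ z t j)
    (hsnn : ∀ t i, 0 ≤ s t i)
    (hsmono : ∀ i, ∀ t₁ t₂ : ℝ, t₁ ≤ t₂ → s t₂ i ≤ s t₁ i)
    (τ : ℝ) (hτ : 0 ≤ τ)
    (hR : specRad (Matrix.fromBlocks (Matrix.diagonal (s τ)) 0 0 (1 : Matrix (Fin m) (Fin m) ℝ)
        * (Matrix.diagonal d)⁻¹ * Bf) < 1)
    (v : Fin n ⊕ Fin m → ℝ)
    (hv : ∀ j, 0 ≤ v j) (hvnorm : ∑ j, v j = 1)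
    (hveig : Matrix.vecMul v
        (Matrix.fromBlocks (Matrix.diagonal (s τ)) 0 0 (1 : Matrix (Fin m) (Fin m) ℝ) * Bf
          - Matrix.diagonal d)
      = lamMax (Matrix.fromBlocks (Matrix.diagonal (s τ)) 0 0 (1 : Matrix (Fin m) (Fin m) ℝ) * Bf
          - Matrix.diagonal d) • v) :
    lamMax (Matrix.fromBlocks (Matrix.diagonal (s τ)) 0 0 (1 : Matrix (Fin m) (Fin m) ℝ) * Bf
        - Matrix.diagonal d) < 0 ∧
    (∀ t : ℝ, τ ≤ t → v ⬝ᵥ z t ≤ (v ⬝ᵥ z τ) *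
      Real.exp (lamMax (Matrix.fromBlocks (Matrix.diagonal (s τ)) 0 0
        (1 : Matrix (Fin m) (Fin m) ℝ) * Bf - Matrix.diagonal d) * (t - τ))) ∧
    (∀ t₁ t₂ : ℝ, τ ≤ t₁ → t₁ ≤ t₂ → v ⬝ᵥ z t₂ ≤ v ⬝ᵥ z t₁) ∧
    Filter.Tendsto (fun t => v ⬝ᵥ z t) Filter.atTop (nhds 0) := by
  classical
  set lam := lamMax (Matrix.fromBlocks (Matrix.diagonal (s τ)) 0 0
      (1 : Matrix (Fin m) (Fin m) ℝ) * Bf - Matrix.diagonal d) with hlam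
  -- the diagonal "susceptibility" function at each time
  set h : ℝ → (Fin n ⊕ Fin m) → ℝ := fun t => Sum.elim (s t) (fun _ => 1) with hh
  have hHdiag : ∀ t, Matrix.fromBlocks (Matrix.diagonal (s t)) 0 0
      (1 : Matrix (Fin m) (Fin m) ℝ) = Matrix.diagonal (h t) := by
    intro t
    rw [hh, ← Matrix.diagonal_one, Matrix.fromBlocks_diagonal]
  have hhnn : ∀ t i, 0 ≤ h t i := by
    rintro t (i | i)
    · exact hsnn t i
    · norm_num [hh]
  have hhle : ∀ t, τ ≤ t → ∀ i, h t i ≤ h τ i := by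
    rintro t ht (i | i)
    · exact hsmono i τ t ht
    · simp [hh]
  -- there is a strictly positive entry of v
  obtain ⟨j0, hj0⟩ : ∃ j, 0 < v j := by
    by_contra hcon
    push_neg at hcon
    have : (∑ j, v j) ≤ 0 := Finset.sum_nonpos fun j _ => hcon j
    rw [hvnorm] at this; linarith
  -- eigen relation rephrased
  have hveig' : ∀ j, ∑ i, v i * (h τ i * Bf i j) = lam * v j + v j * d j := by
    intro j
    have h1 : Matrix.vecMul v (Matrix.diagonal (h τ) * Bf - Matrix.diagonal d) j
        = lam * v j := by
      rw [← hHdiag τ]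
      have := congrFun hveig j
      simpa [hlam] using this
    have h2 : Matrix.vecMul v (Matrix.diagonal (h τ) * Bf - Matrix.diagonal d) j
        = (∑ i, v i * (h τ i * Bf i j)) - v j * d j := by
      rw [Matrix.vecMul_sub, Pi.sub_apply, Matrix.vecMul_diagonal]
      congr 1
      simp only [Matrix.vecMul, dotProduct, Matrix.diagonal_mul]
    have := h2.symm.trans h1
    linarith
  -- Part 1: lam < 0
  have hlamneg : lam < 0 := by
    by_contra hcon
    push_neg at hcon
    set M := Matrix.fromBlocks (Matrix.diagonal (s τ)) 0 0
        (1 : Matrix (Fin m) (Fin m) ℝ) * (Matrix.diagonal d)⁻¹ * Bf with hMdef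
    have hdinv : (Matrix.diagonal d)⁻¹ = Matrix.diagonal (fun i => (d i)⁻¹) := by
      refine Matrix.inv_eq_right_inv ?_
      rw [Matrix.diagonal_mul_diagonal, ← Matrix.diagonal_one]
      exact congrArg Matrix.diagonal (funext fun i => mul_inv_cancel₀ (hd i).ne')
    have hMne : M = Matrix.diagonal (fun i => h τ i * (d i)⁻¹) * Bf := by
      rw [hMdef, hHdiag τ, hdinv, Matrix.diagonal_mul_diagonal]
    have hMnn : ∀ i j, 0 ≤ M i j := by
      intro i j
      rw [hMne, Matrix.diagonal_mul]
      have : 0 ≤ (d i)⁻¹ := (inv_pos.2 (hd i)).le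
      exact mul_nonneg (mul_nonneg (hhnn τ i) this) (hBf i j)
    set w : Fin n ⊕ Fin m → ℝ := fun j => d j * v j with hw
    have hwnn : ∀ j, 0 ≤ w j := fun j => mul_nonneg (hd j).le (hv j)
    have hwj0 : 0 < w j0 := mul_pos (hd j0) hj0
    have hle : ∀ j, w j ≤ Matrix.vecMul w M j := by
      intro j
      have hcomp : Matrix.vecMul w M j = ∑ i, v i * (h τ i * Bf i j) := by
        rw [hMne]
        simp only [Matrix.vecMul, dotProduct, Matrix.diagonal_mul]
        refine Finset.sum_congr rfl fun i _ => ?_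
        have hdne : d i ≠ 0 := (hd i).ne'
        field_simp [hw]
        ring
      rw [hcomp, hveig' j]
      have : 0 ≤ lam * v j := mul_nonneg hcon (hv j)
      simp only [hw]; linarith
    exact aux_no_supersolution M hMnn hR w hwnn j0 hwj0 hle
  -- derivative of y(t) = v ⬝ᵥ z t
  set y : ℝ → ℝ := fun t => v ⬝ᵥ z t with hy
  have hynn : ∀ t, 0 ≤ y t :=
    fun t => Finset.sum_nonneg fun j _ => mul_nonneg (hv j) (hznn t j)
  have hyderiv : ∀ t, HasDerivAt y
      (v ⬝ᵥ ((Matrix.fromBlocks (Matrix.diagonal (s t)) 0 0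
        (1 : Matrix (Fin m) (Fin m) ℝ) * Bf - Matrix.diagonal d).mulVec (z t))) t := by
    intro t
    have : HasDerivAt (fun σ => ∑ j, v j * z σ j)
        (∑ j, v j * ((Matrix.fromBlocks (Matrix.diagonal (s t)) 0 0
          (1 : Matrix (Fin m) (Fin m) ℝ) * Bf - Matrix.diagonal d).mulVec (z t)) j) t :=
      HasDerivAt.fun_sum fun j _ => (hzdyn j t).const_mul (v j)
    simpa [hy, dotProduct] using this
  -- key differential inequality for t ≥ τ
  have hkey : ∀ t, τ ≤ t →
      v ⬝ᵥ ((Matrix.fromBlocks (Matrix.diagonal (s t)) 0 0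
        (1 : Matrix (Fin m) (Fin m) ℝ) * Bf - Matrix.diagonal d).mulVec (z t)) ≤ lam * y t := by
    intro t ht
    have hdot : ∀ t', v ⬝ᵥ ((Matrix.fromBlocks (Matrix.diagonal (s t')) 0 0
        (1 : Matrix (Fin m) (Fin m) ℝ) * Bf - Matrix.diagonal d).mulVec (z t))
        = ∑ j, ((∑ i, v i * (h t' i * Bf i j)) - v j * d j) * z t j := by
      intro t'
      rw [dotProduct_mulVec, hHdiag t']
      refine Finset.sum_congr rfl fun j _ => ?_
      congr 1
      rw [Matrix.vecMul_sub, Pi.sub_apply, Matrix.vecMul_diagonal]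
      congr 1
      simp only [Matrix.vecMul, dotProduct, Matrix.diagonal_mul]
    rw [hdot t]
    have hstep : ∀ j, ((∑ i, v i * (h t i * Bf i j)) - v j * d j) * z t j
        ≤ ((∑ i, v i * (h τ i * Bf i j)) - v j * d j) * z t j := by
      intro j
      refine mul_le_mul_of_nonneg_right (sub_le_sub_right ?_ _) (hznn t j)
      refine Finset.sum_le_sum fun i _ => ?_
      exact mul_le_mul_of_nonneg_left
        (mul_le_mul_of_nonneg_right (hhle t ht i) (hBf i j)) (hv i)
    calc (∑ j, ((∑ i, v i * (h t i * Bf i j)) - v j * d j) * z t j)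
        ≤ ∑ j, ((∑ i, v i * (h τ i * Bf i j)) - v j * d j) * z t j :=
          Finset.sum_le_sum fun j _ => hstep j
      _ = ∑ j, lam * v j * z t j := by
          refine Finset.sum_congr rfl fun j _ => ?_
          rw [hveig' j]; ring_nf
      _ = lam * y t := by
          simp only [hy, dotProduct, Finset.mul_sum]
          exact Finset.sum_congr rfl fun j _ => by ring
  -- the auxiliary function g(t) = y(t) e^{-lam t} is antitone on [τ, ∞)
  set g : ℝ → ℝ := fun t => y t * Real.exp (-lam * t) with hg
  have hgderiv : ∀ t, HasDerivAt g
      ((v ⬝ᵥ ((Matrix.fromBlocks (Matrix.diagonal (s t)) 0 0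
        (1 : Matrix (Fin m) (Fin m) ℝ) * Bf - Matrix.diagonal d).mulVec (z t)))
        * Real.exp (-lam * t) + y t * (Real.exp (-lam * t) * (-lam))) t := by
    intro t
    have hexp' : HasDerivAt (fun u : ℝ => Real.exp (-lam * u))
        (Real.exp (-lam * t) * (-lam)) t := by
      simpa using (((hasDerivAt_id t).const_mul (-lam)).exp)
    exact (hyderiv t).mul hexp'
  have hganti : AntitoneOn g (Set.Ici τ) := by
    have hdiff : ∀ t, DifferentiableAt ℝ g t := fun t => (hgderiv t).differentiableAt
    refine antitoneOn_of_deriv_nonpos (convex_Ici τ)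
      ((fun t (_ : t ∈ Set.Ici τ) => (hdiff t).continuousAt.continuousWithinAt))
      (fun t _ => (hdiff t).differentiableWithinAt) ?_
    intro t ht
    rw [interior_Ici] at ht
    rw [(hgderiv t).deriv]
    have h1 := hkey t ht.le
    have h2 : (0:ℝ) < Real.exp (-lam * t) := Real.exp_pos _
    nlinarith [h2]
  -- exponential bound
  have hexp : ∀ t, τ ≤ t → y t ≤ y τ * Real.exp (lam * (t - τ)) := by
    intro t ht
    have hgle : g t ≤ g τ := hganti (Set.self_mem_Ici) ht ht
    have h2 : (0:ℝ) < Real.exp (lam * t) := Real.exp_pos _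
    calc y t = y t * Real.exp (-lam * t) * Real.exp (lam * t) := by
          rw [mul_assoc, ← Real.exp_add]; ring_nf; simp
      _ ≤ y τ * Real.exp (-lam * τ) * Real.exp (lam * t) :=
          mul_le_mul_of_nonneg_right hgle h2.le
      _ = y τ * Real.exp (lam * (t - τ)) := by
          rw [mul_assoc, ← Real.exp_add]; ring_nf
  refine ⟨hlamneg, hexp, ?_, ?_⟩
  · -- monotonicity
    intro t₁ t₂ ht₁ ht₂
    have hgle : g t₂ ≤ g t₁ := hganti (Set.mem_Ici.2 ht₁) (Set.mem_Ici.2 (ht₁.trans ht₂)) ht₂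
    have hg1nn : 0 ≤ g t₁ := mul_nonneg (hynn t₁) (Real.exp_pos _).le
    have hexple : Real.exp (lam * t₂) ≤ Real.exp (lam * t₁) :=
      Real.exp_le_exp.2 (by nlinarith)
    have key : y t₂ = g t₂ * Real.exp (lam * t₂) := by
      rw [hg, mul_assoc, ← Real.exp_add]; ring_nf; simp
    have key1 : y t₁ = g t₁ * Real.exp (lam * t₁) := by
      rw [hg, mul_assoc, ← Real.exp_add]; ring_nf; simp
    calc y t₂ = g t₂ * Real.exp (lam * t₂) := key
      _ ≤ g t₁ * Real.exp (lam * t₂) := mul_le_mul_of_nonneg_right hgle (Real.exp_pos _).le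
      _ ≤ g t₁ * Real.exp (lam * t₁) := mul_le_mul_of_nonneg_left hexple hg1nn
      _ = y t₁ := key1.symm
  · -- convergence to zero
    have hub : Filter.Tendsto (fun t => y τ * Real.exp (lam * (t - τ))) Filter.atTop (nhds 0) := by
      have h1 : Filter.Tendsto (fun t : ℝ => lam * (t - τ)) Filter.atTop Filter.atBot := by
        have h2 : Filter.Tendsto (fun t : ℝ => t - τ) Filter.atTop Filter.atTop :=
          Filter.tendsto_atTop_add_const_right _ (-τ) Filter.tendsto_id
        simpa [mul_comm] using h2.atTop_mul_const_of_neg hlamneg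
      have h3 : Filter.Tendsto (fun t : ℝ => Real.exp (lam * (t - τ))) Filter.atTop (nhds 0) :=
        Real.tendsto_exp_atBot.comp h1
      simpa using h3.const_mul (y τ)
    refine squeeze_zero' ?_ ?_ hub
    · exact Filter.Eventually.of_forall fun t => hynn t
    · filter_upwards [Filter.eventually_ge_atTop τ] with t ht using hexp t ht
end

section
/- Along trajectories of the multilayer SIR model with s(0) ≫ 0, z(0) > 0, if there exists a time τ_p with R(τ_p) = 1, then the weighted average v(τ_p)^T z(t) attains its maximum over all t ≥ 0 at t = τ_p, where v(τ_p) is the normalized left Perron eigenvector of H(s(τ_p))B_f - D_f. -/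
open Matrix BigOperators Set
open scoped ENNReal NNReal

section AuxSpectral

attribute [local instance] Matrix.linftyOpNormedRing Matrix.linftyOpNormedAlgebra
  Matrix.linftyOpNormedAddCommGroup Matrix.linftyOpNormedSpace

variable {N : Type*} [Fintype N] [DecidableEq N]

lemma pow_entry_nonneg' (X : Matrix N N ℝ) (h : ∀ i j, 0 ≤ X i j) :
    ∀ (k : ℕ) i j, 0 ≤ (X ^ k) i j := by
  intro k
  induction k with
  | zero => intro i j; rw [pow_zero, Matrix.one_apply]; split <;> norm_num
  | succ k ih =>
    intro i j
    rw [pow_succ, Matrix.mul_apply]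
    exact Finset.sum_nonneg fun l _ => mul_nonneg (ih i l) (h l j)

lemma pow_entry_mono' (X Y : Matrix N N ℝ) (hY : ∀ i j, 0 ≤ Y i j)
    (hXY : ∀ i j, Y i j ≤ X i j) : ∀ (k : ℕ) i j, (Y ^ k) i j ≤ (X ^ k) i j := by
  have hX : ∀ i j, 0 ≤ X i j := fun i j => (hY i j).trans (hXY i j)
  intro k
  induction k with
  | zero => intro i j; rfl
  | succ k ih =>
    intro i j
    rw [pow_succ, pow_succ, Matrix.mul_apply, Matrix.mul_apply]
    apply Finset.sum_le_sum
    intro l _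
    exact mul_le_mul (ih i l) (hXY l j) (hY l j) (pow_entry_nonneg' X hX k i l)

lemma diag_mul_pow_pos (B : Matrix N N ℝ) (hB : ∀ i j, 0 ≤ B i j) (ht : N → ℝ)
    (htpos : ∀ i, 0 < ht i) :
    ∀ (k : ℕ) i j, 0 < (B ^ k) i j → 0 < ((Matrix.diagonal ht * B) ^ k) i j := by
  have hDB : ∀ i j, 0 ≤ (Matrix.diagonal ht * B) i j := by
    intro i j; rw [Matrix.diagonal_mul]; exact mul_nonneg (htpos i).le (hB i j)
  intro k
  induction k with
  | zero => intro i j h; rwa [pow_zero] at h ⊢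
  | succ k ih =>
    intro i j h
    rw [pow_succ, Matrix.mul_apply] at h
    have : ∃ l ∈ Finset.univ, (0:ℝ) < (B ^ k) i l * B l j := by
      apply Finset.exists_lt_of_sum_lt (f := fun _ => (0:ℝ))
      simpa using h
    obtain ⟨l, -, hl⟩ := this
    have hb1 : 0 < (B ^ k) i l := by
      rcases (pow_entry_nonneg' B hB k i l).lt_or_eq with h'|h'
      · exact h'
      · rw [← h'] at hl; simp at hl
    have hb2 : 0 < B l j := by
      rcases (hB l j).lt_or_eq with h'|h'
      · exact h'
      · rw [← h'] at hl; simp at hl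
    rw [pow_succ, Matrix.mul_apply]
    apply Finset.sum_pos'
    · intro l' _
      exact mul_nonneg (pow_entry_nonneg' _ hDB k i l') (hDB l' j)
    · refine ⟨l, Finset.mem_univ l, mul_pos (ih i l hb1) ?_⟩
      rw [Matrix.diagonal_mul]
      exact mul_pos (htpos l) hb2

lemma pos_of_left_eig (P : Matrix N N ℝ) (hP : ∀ i j, 0 ≤ P i j)
    (hirr : ∀ i j, ∃ k, 0 < (P ^ k) i j)
    (v c : N → ℝ) (hv : ∀ j, 0 ≤ v j)
    (heq : ∀ j, Matrix.vecMul v P j = c j * v j)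
    (i0 : N) (hi0 : 0 < v i0) : ∀ j, 0 < v j := by
  have base : ∀ j, v j = 0 → ∀ i, v i * P i j = 0 := by
    intro j hj i
    have hsum : ∑ i, v i * P i j = 0 := by
      have := heq j
      rw [Matrix.vecMul, dotProduct] at this
      rw [this, hj, mul_zero]
    exact (Finset.sum_eq_zero_iff_of_nonneg
      (fun i _ => mul_nonneg (hv i) (hP i j))).1 hsum i (Finset.mem_univ i)
  have key : ∀ (k : ℕ) j, v j = 0 → Matrix.vecMul v (P ^ k) j = 0 := by
    intro k
    induction k with
    | zero => intro j hj; rw [pow_zero, Matrix.vecMul_one]; exact hj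
    | succ k ih =>
      intro j hj
      rw [pow_succ, ← Matrix.vecMul_vecMul, Matrix.vecMul, dotProduct]
      apply Finset.sum_eq_zero
      intro i _
      rcases eq_or_ne (v i) 0 with h|h
      · rw [ih i h, zero_mul]
      · have := base j hj i
        rcases mul_eq_zero.1 this with h'|h'
        · exact absurd h' h
        · rw [h', mul_zero]
  intro j
  rcases (hv j).lt_or_eq with h|h
  · exact h
  · exfalso
    obtain ⟨k, hk⟩ := hirr i0 j
    have h0 := key k j h.symm
    have h1 : 0 < Matrix.vecMul v (P ^ k) j := by
      rw [Matrix.vecMul, dotProduct]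
      exact Finset.sum_pos'
        (fun i _ => mul_nonneg (hv i) (pow_entry_nonneg' P hP k i j))
        ⟨i0, Finset.mem_univ i0, mul_pos hi0 hk⟩
    rw [h0] at h1
    exact lt_irrefl _ h1

lemma exists_left_eigenvector (A : Matrix N N ℂ) (μ : ℂ) (hμ : μ ∈ spectrum ℂ A) :
    ∃ x : N → ℂ, x ≠ 0 ∧ Matrix.vecMul x A = μ • x := by
  rw [spectrum.mem_iff] at hμ
  have hdet : ((algebraMap ℂ (Matrix N N ℂ)) μ - A).det = 0 := by
    by_contra h
    exact hμ ((Matrix.isUnit_iff_isUnit_det _).2 (isUnit_iff_ne_zero.2 h))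
  have hdetT : ((algebraMap ℂ (Matrix N N ℂ)) μ - A)ᵀ.det = 0 := by
    rw [Matrix.det_transpose]; exact hdet
  obtain ⟨x, hx0, hx⟩ := (Matrix.exists_mulVec_eq_zero_iff).2 hdetT
  refine ⟨x, hx0, ?_⟩
  rw [Matrix.transpose_sub, Matrix.sub_mulVec] at hx
  have h1 : ((algebraMap ℂ (Matrix N N ℂ)) μ)ᵀ *ᵥ x = μ • x := by
    rw [Algebra.algebraMap_eq_smul_one]
    simp [Matrix.transpose_smul, Matrix.smul_mulVec]
  have h2 : Aᵀ *ᵥ x = x ᵥ* A := Matrix.mulVec_transpose A x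
  rw [h1, h2] at hx
  rw [sub_eq_zero] at hx
  exact hx.symm

/-- Upper bound on the spectral radius via a positive row vector `u` with `u M ≤ q u`. -/
lemma specRad_le_of_vecMul_le [Nonempty N] (M : Matrix N N ℝ) (hM : ∀ i j, 0 ≤ M i j)
    (u : N → ℝ) (hu : ∀ i, 0 < u i) (q : ℝ) (hq : 0 ≤ q)
    (h : ∀ j, Matrix.vecMul u M j ≤ q * u j) :
    specRad M ≤ q := by
  apply Real.sSup_le _ hq
  rintro r ⟨μ, hμ, rfl⟩
  obtain ⟨x, hx0, hx⟩ := exists_left_eigenvector _ μ hμ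
  obtain ⟨j0, -, hj0⟩ := Finset.exists_max_image Finset.univ
    (fun j => ‖x j‖ / u j) ⟨Classical.arbitrary N, Finset.mem_univ _⟩
  set t := ‖x j0‖ / u j0 with ht
  have hxle : ∀ i, ‖x i‖ ≤ t * u i := by
    intro i
    have h1 := hj0 i (Finset.mem_univ i)
    rw [div_le_div_iff₀ (hu i) (hu j0)] at h1
    rw [ht, div_mul_eq_mul_div, le_div_iff₀ (hu j0)]
    linarith
  have ht0 : 0 < t := by
    rcases Function.ne_iff.1 hx0 with ⟨i, hi⟩
    have h2 : 0 < ‖x i‖ := by simpa using hi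
    have h3 := h2.trans_le (hxle i)
    by_contra h'
    push_neg at h'
    nlinarith [hu i]
  have hxj0 : ‖x j0‖ = t * u j0 := by
    rw [ht, div_mul_cancel₀ _ (hu j0).ne']
  have hev : (Matrix.vecMul x (M.map (Complex.ofReal ·))) j0 = μ * x j0 := by
    rw [hx]; simp
  have habs : ‖μ‖ * ‖x j0‖ ≤ q * (t * u j0) := by
    calc ‖μ‖ * ‖x j0‖ = ‖μ * x j0‖ :=
        (norm_mul _ _).symm
    _ = ‖∑ i, x i * (M i j0 : ℂ)‖ := by
        rw [← hev]; rw [Matrix.vecMul, dotProduct]; simp [Matrix.map_apply]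
    _ ≤ ∑ i, ‖x i * (M i j0 : ℂ)‖ := by
        exact norm_sum_le _ _
    _ = ∑ i, ‖x i‖ * M i j0 := by
        apply Finset.sum_congr rfl; intro i _
        rw [norm_mul, Complex.norm_real, Real.norm_eq_abs, abs_of_nonneg (hM i j0)]
    _ ≤ ∑ i, t * u i * M i j0 := by
        apply Finset.sum_le_sum; intro i _
        exact mul_le_mul_of_nonneg_right (hxle i) (hM i j0)
    _ = t * Matrix.vecMul u M j0 := by
        rw [Matrix.vecMul, dotProduct, Finset.mul_sum]
        apply Finset.sum_congr rfl; intro i _; ring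
    _ ≤ t * (q * u j0) := mul_le_mul_of_nonneg_left (h j0) ht0.le
    _ = q * (t * u j0) := by ring
  rw [hxj0] at habs
  have : 0 < t * u j0 := mul_pos ht0 (hu j0)
  exact le_of_mul_le_mul_right (by linarith [habs]) this

lemma entry_le_linfty_norm (A : Matrix N N ℂ) (i j : N) : ‖A i j‖ ≤ ‖A‖ := by
  have h : ‖A i j‖₊ ≤ ‖A‖₊ := by
    rw [Matrix.linfty_opNNNorm_def]
    exact le_trans
      (Finset.single_le_sum (f := fun j' => ‖A i j'‖₊) (fun _ _ => by positivity) (Finset.mem_univ j))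
      (Finset.le_sup (f := fun i => ∑ j, ‖A i j‖₊) (Finset.mem_univ i))
  exact_mod_cast h

lemma le_specRad_of_le_vecMul [Nonempty N] (M : Matrix N N ℝ) (hM : ∀ i j, 0 ≤ M i j)
    (u : N → ℝ) (hu : ∀ i, 0 ≤ u i) (j0 : N) (hj0 : 0 < u j0) (q : ℝ) (hq : 0 < q)
    (h : ∀ j, q * u j ≤ Matrix.vecMul u M j) :
    q ≤ specRad M := by
  classical
  set Mc : Matrix N N ℂ := M.map (Complex.ofReal ·) with hMc
  have hpow : ∀ k : ℕ, Mc ^ k = (M ^ k).map (Complex.ofReal ·) := by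
    intro k
    have : Mc = (Complex.ofRealHom.mapMatrix : Matrix N N ℝ →+* Matrix N N ℂ) M := rfl
    rw [this, ← map_pow]
    rfl
  have hkey : ∀ (k : ℕ) j, q ^ k * u j ≤ Matrix.vecMul u (M ^ k) j := by
    intro k
    induction k with
    | zero => intro j; simp [Matrix.vecMul_one]
    | succ k ih =>
      intro j
      rw [pow_succ M k, ← Matrix.vecMul_vecMul]
      have : q ^ (k+1) * u j ≤ q ^ k * Matrix.vecMul u M j := by
        rw [pow_succ, mul_assoc]
        exact mul_le_mul_of_nonneg_left (h j) (pow_nonneg hq.le k)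
      refine this.trans ?_
      rw [Matrix.vecMul, Matrix.vecMul, dotProduct, dotProduct, Finset.mul_sum]
      apply Finset.sum_le_sum
      intro i _
      have h5 := mul_le_mul_of_nonneg_right (ih i) (hM i j)
      calc q ^ k * (u i * M i j) = q ^ k * u i * M i j := (mul_assoc _ _ _).symm
      _ ≤ _ := h5
  set U : ℝ := ∑ i, u i with hU
  have hU0 : 0 < U := Finset.sum_pos' (fun i _ => hu i) ⟨j0, Finset.mem_univ j0, hj0⟩
  have hnorm : ∀ k : ℕ, q ^ k * u j0 ≤ U * ‖Mc ^ k‖ := by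
    intro k
    refine (hkey k j0).trans ?_
    rw [Matrix.vecMul, dotProduct, hU, Finset.sum_mul]
    apply Finset.sum_le_sum
    intro i _
    apply mul_le_mul_of_nonneg_left _ (hu i)
    have h1 : (M ^ k) i j0 ≤ ‖(Mc ^ k) i j0‖ := by
      rw [hpow k]
      simp only [Matrix.map_apply, Complex.norm_real]
      exact le_abs_self _
    exact h1.trans (entry_le_linfty_norm _ i j0)
  by_contra hlt
  push_neg at hlt
  set r : ℝ := max (specRad M) 0 with hr
  have hrq : r < q := max_lt hlt hq
  have hρ : spectralRadius ℂ Mc ≤ ENNReal.ofReal r := by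
    rw [spectralRadius]
    apply iSup₂_le
    intro μ hμ
    have habs : ‖μ‖ ≤ specRad M := by
      apply le_csSup
      · exact (Set.Finite.image _ (Matrix.finite_spectrum Mc)).bddAbove.mono
          (by intro x hx; obtain ⟨μ', hμ', rfl⟩ := hx; exact ⟨μ', hμ', rfl⟩)
      · exact ⟨μ, hμ, rfl⟩
    have : ‖μ‖ ≤ r := by exact habs.trans (le_max_left _ _)
    calc (‖μ‖₊ : ℝ≥0∞) = ENNReal.ofReal ‖μ‖ := (ofReal_norm μ).symm
    _ ≤ ENNReal.ofReal r := ENNReal.ofReal_le_ofReal this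
  set p : ℝ := (r + q) / 2 with hp
  have hrp : r < p := by rw [hp]; linarith
  have hpq : p < q := by rw [hp]; linarith
  have hp0 : 0 < p := lt_of_le_of_lt (le_max_right _ _) hrp
  have hev : ∀ᶠ k : ℕ in Filter.atTop, (‖Mc ^ k‖₊ : ℝ≥0∞) ^ (1 / (k:ℝ)) < ENNReal.ofReal p := by
    apply Filter.Tendsto.eventually_lt_const _
      (spectrum.pow_nnnorm_pow_one_div_tendsto_nhds_spectralRadius Mc)
    exact lt_of_le_of_lt hρ ((ENNReal.ofReal_lt_ofReal_iff hp0).2 hrp)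
  obtain ⟨K, hK⟩ := Filter.eventually_atTop.1 hev
  have hpq1 : p / q < 1 := (div_lt_one hq).2 hpq
  have hc0 : 0 < u j0 / U := div_pos hj0 hU0
  obtain ⟨k1, hk1⟩ := exists_pow_lt_of_lt_one hc0 hpq1
  set k : ℕ := max K k1 + 1 with hk
  have hkK : K ≤ k := le_trans (le_max_left _ _) (Nat.le_succ _)
  have hkk1 : k1 ≤ k := le_trans (le_max_right _ _) (Nat.le_succ _)
  have hk0 : (k:ℝ) ≠ 0 := by positivity
  have hub : ‖Mc ^ k‖ ≤ p ^ k := by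
    have h1 := hK k hkK
    have h2 : ((‖Mc ^ k‖₊ : ℝ≥0∞) ^ (1 / (k:ℝ))) ^ (k:ℝ) < (ENNReal.ofReal p) ^ (k:ℝ) :=
      ENNReal.rpow_lt_rpow h1 (by positivity)
    rw [← ENNReal.rpow_mul, one_div, inv_mul_cancel₀ hk0, ENNReal.rpow_one] at h2
    rw [ENNReal.ofReal_rpow_of_pos hp0, Real.rpow_natCast] at h2
    have h3 : ‖Mc ^ k‖₊ < (p ^ k).toNNReal := by
      rw [ENNReal.ofReal] at h2
      exact_mod_cast h2
    have h4 : (‖Mc ^ k‖₊ : ℝ) ≤ ((p ^ k).toNNReal : ℝ) := le_of_lt (by exact_mod_cast h3)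
    rwa [coe_nnnorm, Real.coe_toNNReal _ (by positivity)] at h4
  have hcb : u j0 / U ≤ (p / q) ^ k := by
    have := (hnorm k).trans (mul_le_mul_of_nonneg_left hub hU0.le)
    rw [div_pow, div_le_div_iff₀ hU0 (by positivity)]
    calc u j0 * q ^ k = q ^ k * u j0 := by ring
    _ ≤ U * p ^ k := this
    _ = p ^ k * U := by ring
  have : (p/q) ^ k ≤ (p/q) ^ k1 :=
    pow_le_pow_of_le_one (by positivity) hpq1.le hkk1
  linarith [hk1, hcb, this]

end AuxSpectral

/-- If `s' = -s·g` with `g` continuous and `s 0 > 0`, then `s` stays positive. -/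
lemma ode_pos {s g : ℝ → ℝ} (hg : Continuous g)
    (hs : ∀ t, HasDerivAt s (-(s t) * g t) t) (h0 : 0 < s 0) (t : ℝ) : 0 < s t := by
  set G : ℝ → ℝ := fun t => ∫ τ in (0:ℝ)..t, g τ with hGdef
  have hG : ∀ t, HasDerivAt G (g t) t := fun t =>
    intervalIntegral.integral_hasDerivAt_right (hg.intervalIntegrable _ _)
      (hg.stronglyMeasurableAtFilter _ _) hg.continuousAt
  set φ : ℝ → ℝ := fun t => s t * Real.exp (G t) with hφdef
  have hφ : ∀ t, HasDerivAt φ 0 t := by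
    intro t
    have h1 : HasDerivAt φ (-(s t) * g t * Real.exp (G t) + s t * (Real.exp (G t) * g t)) t :=
      (hs t).mul ((hG t).exp)
    convert h1 using 1
    ring
  have hconst : φ t = φ 0 := is_const_of_deriv_eq_zero
    (fun x => (hφ x).differentiableAt) (fun x => (hφ x).deriv) t 0
  have hG0 : G 0 = 0 := intervalIntegral.integral_same
  have h2 : s t * Real.exp (G t) = s 0 := by
    have := hconst
    rw [hφdef] at this
    simpa [hG0] using this
  nlinarith [Real.exp_pos (G t), h0, h2]

/-- Theorem 1(iii): if R(τ_p) = 1, the weighted average v(τ_p)ᵀz(t)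
attains its maximum over t ≥ 0 at t = τ_p. -/
theorem peak_infection_at_R_eq_one (n m : ℕ)
    (Bf : Matrix (Fin n ⊕ Fin m) (Fin n ⊕ Fin m) ℝ) (d : Fin n ⊕ Fin m → ℝ)
    (hBf : ∀ i j, 0 ≤ Bf i j) (hBfirr : Irred Bf) (hd : ∀ i, 0 < d i)
    (s : ℝ → Fin n → ℝ) (z : ℝ → (Fin n ⊕ Fin m) → ℝ)
    (hsdyn : ∀ i t, HasDerivAt (fun τ => s τ i)
      (-(s t i) * ((Bf.mulVec (z t)) (Sum.inl i))) t)
    (hzdyn : ∀ j t, HasDerivAt (fun σ => z σ j)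
      (((Matrix.fromBlocks (Matrix.diagonal (s t)) 0 0 (1 : Matrix (Fin m) (Fin m) ℝ) * Bf
          - Matrix.diagonal d).mulVec (z t)) j) t)
    (hs0 : ∀ i, 0 < s 0 i) (hz0 : ∀ j, 0 ≤ z 0 j) (hz0ne : z 0 ≠ 0)
    (hznn : ∀ t j, 0 ≤ z t j) (hsnn : ∀ t i, 0 ≤ s t i)
    (hsmono : ∀ i, ∀ t₁ t₂ : ℝ, t₁ ≤ t₂ → s t₂ i ≤ s t₁ i)
    (τp : ℝ) (hτp : 0 ≤ τp)
    (hR : specRad (Matrix.fromBlocks (Matrix.diagonal (s τp)) 0 0 (1 : Matrix (Fin m) (Fin m) ℝ)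
        * (Matrix.diagonal d)⁻¹ * Bf) = 1)
    (v : Fin n ⊕ Fin m → ℝ)
    (hv : ∀ j, 0 ≤ v j) (hvnorm : ∑ j, v j = 1)
    (hveig : Matrix.vecMul v
        (Matrix.fromBlocks (Matrix.diagonal (s τp)) 0 0 (1 : Matrix (Fin m) (Fin m) ℝ) * Bf
          - Matrix.diagonal d)
      = lamMax (Matrix.fromBlocks (Matrix.diagonal (s τp)) 0 0 (1 : Matrix (Fin m) (Fin m) ℝ) * Bf
          - Matrix.diagonal d) • v) :
    ∀ t : ℝ, 0 ≤ t → v ⬝ᵥ z t ≤ v ⬝ᵥ z τp := by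
  classical
  have hNE : Nonempty (Fin n ⊕ Fin m) := by
    by_contra hne
    rw [not_nonempty_iff] at hne
    rw [Finset.univ_eq_empty, Finset.sum_empty] at hvnorm
    exact absurd hvnorm (by norm_num)
  -- block diagonal rewriting
  have hblock : ∀ w : Fin n → ℝ,
      Matrix.fromBlocks (Matrix.diagonal w) 0 0 (1 : Matrix (Fin m) (Fin m) ℝ)
        = Matrix.diagonal (Sum.elim w (fun _ => (1:ℝ))) := by
    intro w
    rw [← Matrix.diagonal_one, Matrix.fromBlocks_diagonal]
  -- continuity facts
  have hzdiff : ∀ j, Differentiable ℝ (fun t => z t j) :=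
    fun j t => (hzdyn j t).differentiableAt
  have hBzcont : ∀ i, Continuous (fun t => Bf.mulVec (z t) i) := by
    intro i
    have : (fun t => Bf.mulVec (z t) i) = fun t => ∑ j, Bf i j * z t j := by
      funext t; rw [Matrix.mulVec, dotProduct]
    rw [this]
    exact continuous_finset_sum _ fun j _ => continuous_const.mul (hzdiff j).continuous
  -- positivity of s at τp
  have hspos : ∀ i, 0 < s τp i := fun i =>
    ode_pos (hBzcont (Sum.inl i)) (hsdyn i) (hs0 i) τp
  set el : ℝ → (Fin n ⊕ Fin m) → ℝ := fun τ => Sum.elim (s τ) (fun _ => (1:ℝ)) with heldef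
  have htpos : ∀ i, 0 < el τp i := by
    intro i; rcases i with a | b
    · exact hspos a
    · norm_num [heldef]
  set L : ℝ := lamMax (Matrix.fromBlocks (Matrix.diagonal (s τp)) 0 0
      (1 : Matrix (Fin m) (Fin m) ℝ) * Bf - Matrix.diagonal d) with hL
  rw [hblock (s τp)] at hveig
  -- eigen equation in pointwise form
  have hveig' : ∀ j, Matrix.vecMul v (Matrix.diagonal (el τp) * Bf) j = (L + d j) * v j := by
    intro j
    have h1 : Matrix.vecMul v (Matrix.diagonal (el τp) * Bf)
        - Matrix.vecMul v (Matrix.diagonal d) = L • v := by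
      rw [← Matrix.vecMul_sub]
      exact hveig
    have h2 := congrFun h1 j
    simp only [Pi.sub_apply, Pi.smul_apply, smul_eq_mul] at h2
    rw [Matrix.vecMul_diagonal] at h2
    linarith [h2]
  -- positivity of v
  obtain ⟨i0, -, hi0⟩ : ∃ i ∈ Finset.univ, (0:ℝ) < v i := by
    apply Finset.exists_lt_of_sum_lt (f := fun _ => (0:ℝ))
    rw [hvnorm]; norm_num
  have hvpos : ∀ j, 0 < v j := by
    set c : ℝ := |L| + 1 with hc
    set P : Matrix (Fin n ⊕ Fin m) (Fin n ⊕ Fin m) ℝ :=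
      Matrix.diagonal (el τp) * Bf + c • (1 : Matrix (Fin n ⊕ Fin m) (Fin n ⊕ Fin m) ℝ)
      with hP
    have hDBnn : ∀ i j, 0 ≤ (Matrix.diagonal (el τp) * Bf) i j := by
      intro i j; rw [Matrix.diagonal_mul]; exact mul_nonneg (htpos i).le (hBf i j)
    have hPnn : ∀ i j, 0 ≤ P i j := by
      intro i j
      rw [hP, Matrix.add_apply, Matrix.smul_apply, Matrix.one_apply, smul_eq_mul]
      have hcnn : (0:ℝ) ≤ c := by rw [hc]; positivity
      split <;> [skip; skip] <;>
        [exact add_nonneg (hDBnn i j) (by simpa using hcnn);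
         exact add_nonneg (hDBnn i j) (by simp)]
    have hDBleP : ∀ i j, (Matrix.diagonal (el τp) * Bf) i j ≤ P i j := by
      intro i j
      rw [hP, Matrix.add_apply, Matrix.smul_apply, Matrix.one_apply, smul_eq_mul]
      have hcnn : (0:ℝ) ≤ c := by rw [hc]; positivity
      split <;> simp <;> positivity
    have hirrP : ∀ i j, ∃ k, 0 < (P ^ k) i j := by
      intro i j
      obtain ⟨k, hk⟩ := hBfirr i j
      exact ⟨k, lt_of_lt_of_le (diag_mul_pow_pos Bf hBf (el τp) htpos k i j hk)
        (pow_entry_mono' P _ hDBnn hDBleP k i j)⟩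
    have heqP : ∀ j, Matrix.vecMul v P j = (L + d j + c) * v j := by
      intro j
      rw [hP, Matrix.vecMul_add, Pi.add_apply, hveig' j]
      have hsm : Matrix.vecMul v (c • (1 : Matrix (Fin n ⊕ Fin m) (Fin n ⊕ Fin m) ℝ)) j
          = c * v j := by
        rw [Matrix.vecMul, dotProduct]
        rw [Finset.sum_eq_single j (fun i _ hij => by
          simp [Matrix.smul_apply, Matrix.one_apply_ne hij]) (fun hj => absurd (Finset.mem_univ j) hj)]
        simp [Matrix.smul_apply, Matrix.one_apply_eq]
        ring
      rw [hsm]; ring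
    exact pos_of_left_eig P hPnn hirrP v (fun j => L + d j + c) hv heqP i0 hi0
  -- the matrix in hR and its relation to the eigenvector
  set M : Matrix (Fin n ⊕ Fin m) (Fin n ⊕ Fin m) ℝ :=
    Matrix.diagonal (fun i => el τp i * (d i)⁻¹) * Bf with hM
  have hinvd : (Matrix.diagonal d)⁻¹
      = Matrix.diagonal (fun i => (d i)⁻¹) := by
    apply Matrix.inv_eq_right_inv
    rw [Matrix.diagonal_mul_diagonal]
    convert Matrix.diagonal_one with i
    exact mul_inv_cancel₀ (hd i).ne'
  have hMR : specRad M = 1 := by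
    rw [← hR, hblock (s τp), hinvd, Matrix.diagonal_mul_diagonal]
  have hMnn : ∀ i j, 0 ≤ M i j := by
    intro i j
    rw [hM, Matrix.diagonal_mul]
    exact mul_nonneg (mul_nonneg (htpos i).le (inv_nonneg.2 (hd i).le)) (hBf i j)
  set u : (Fin n ⊕ Fin m) → ℝ := fun j => d j * v j with hu
  have hupos : ∀ j, 0 < u j := fun j => mul_pos (hd j) (hvpos j)
  have huM : ∀ j, Matrix.vecMul u M j = u j + L * v j := by
    intro j
    have h1 : Matrix.vecMul u M j = Matrix.vecMul v (Matrix.diagonal (el τp) * Bf) j := by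
      rw [hM, Matrix.vecMul, Matrix.vecMul, dotProduct, dotProduct]
      apply Finset.sum_congr rfl
      intro i _
      rw [Matrix.diagonal_mul, Matrix.diagonal_mul]
      simp only [hu]
      have e : d i * v i * (el τp i * (d i)⁻¹ * Bf i j)
          = (d i * (d i)⁻¹) * (v i * (el τp i * Bf i j)) := by ring
      rw [e, mul_inv_cancel₀ (hd i).ne', one_mul]
    rw [h1, hveig' j, hu]
    ring
  set D : ℝ := ∑ i, d i with hD
  have hD0 : 0 < D := Finset.sum_pos (fun i _ => hd i) Finset.univ_nonempty
  have hdD : ∀ j, d j ≤ D := by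
    intro j
    rw [hD]
    exact Finset.single_le_sum (fun i _ => (hd i).le) (Finset.mem_univ j)
  -- L = 0
  have hL0 : L = 0 := by
    rcases lt_trichotomy L 0 with hneg | hzero | hpos
    · exfalso
      set q : ℝ := max (1 + L / D) (1/2) with hq
      have hq0 : (0:ℝ) ≤ q := le_trans (by norm_num) (le_max_right _ _)
      have hq1 : q < 1 := by
        apply max_lt _ (by norm_num)
        have : L / D < 0 := div_neg_of_neg_of_pos hneg hD0
        linarith
      have hvm : ∀ j, Matrix.vecMul u M j ≤ q * u j := by
        intro j
        rw [huM j]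
        have h3 : L ≤ L / D * d j := by
          rw [div_mul_eq_mul_div, le_div_iff₀ hD0]
          nlinarith [hdD j]
        have h4 : L * v j ≤ L / D * d j * v j :=
          mul_le_mul_of_nonneg_right h3 (hvpos j).le
        calc u j + L * v j ≤ u j + L / D * d j * v j := by linarith
        _ = (1 + L / D) * u j := by simp only [hu]; ring
        _ ≤ q * u j := mul_le_mul_of_nonneg_right (le_max_left _ _)
            (mul_pos (hd j) (hvpos j)).le
      have := specRad_le_of_vecMul_le M hMnn u hupos q hq0 hvm
      rw [hMR] at this
      linarith
    · exact hzero
    · exfalso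
      set q : ℝ := 1 + L / D with hq
      have hq1 : 1 < q := by
        have : 0 < L / D := div_pos hpos hD0
        rw [hq]; linarith
      have hvm : ∀ j, q * u j ≤ Matrix.vecMul u M j := by
        intro j
        rw [huM j]
        have h3 : L / D * d j ≤ L := by
          rw [div_mul_eq_mul_div, div_le_iff₀ hD0]
          nlinarith [hdD j]
        have h4 : L / D * d j * v j ≤ L * v j :=
          mul_le_mul_of_nonneg_right h3 (hvpos j).le
        calc q * u j = (1 + L / D) * u j := by rw [hq]
        _ = u j + L / D * d j * v j := by simp only [hu]; ring
        _ ≤ u j + L * v j := by linarith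
      have := le_specRad_of_le_vecMul M hMnn u (fun j => (hupos j).le) i0 (hupos i0)
        q (by linarith) hvm
      rw [hMR] at this
      linarith
  -- eigen equation with L = 0
  have hveig0 : Matrix.vecMul v (Matrix.diagonal (el τp) * Bf - Matrix.diagonal d) = 0 := by
    have h9 := hveig
    rw [hL0, zero_smul] at h9
    exact h9
  -- derivative of the weighted average
  have hBznn : ∀ t i, 0 ≤ Bf.mulVec (z t) i := by
    intro t i
    rw [Matrix.mulVec, dotProduct]
    exact Finset.sum_nonneg fun j _ => mul_nonneg (hBf i j) (hznn t j)
  have hval : ∀ t, (∑ j, v j *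
      ((Matrix.fromBlocks (Matrix.diagonal (s t)) 0 0 (1 : Matrix (Fin m) (Fin m) ℝ) * Bf
        - Matrix.diagonal d).mulVec (z t)) j)
      = ∑ i, v i * (el t i - el τp i) * (Bf.mulVec (z t)) i := by
    intro t
    rw [hblock (s t)]
    have e1 : (∑ j, v j *
        ((Matrix.diagonal (Sum.elim (s t) (fun _ => (1:ℝ))) * Bf
          - Matrix.diagonal d).mulVec (z t)) j)
        = v ⬝ᵥ ((Matrix.diagonal (el t) * Bf - Matrix.diagonal d) *ᵥ z t) := rfl
    rw [e1, dotProduct_mulVec]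
    have e2 : Matrix.vecMul v (Matrix.diagonal (el t) * Bf - Matrix.diagonal d)
        = Matrix.vecMul (fun i => v i * (el t i - el τp i)) Bf := by
      have e3 : Matrix.diagonal (el t) * Bf - Matrix.diagonal d
          = (Matrix.diagonal (el τp) * Bf - Matrix.diagonal d)
            + Matrix.diagonal (fun i => el t i - el τp i) * Bf := by
        ext i j
        simp only [Matrix.sub_apply, Matrix.add_apply, Matrix.diagonal_mul]
        ring
      rw [e3, Matrix.vecMul_add, hveig0, zero_add, ← Matrix.vecMul_vecMul]
      have e4 : (v ᵥ* Matrix.diagonal fun i => el t i - el τp i)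
          = fun i => v i * (el t i - el τp i) :=
        funext fun i => Matrix.vecMul_diagonal v _ i
      rw [e4]
    rw [e2, ← dotProduct_mulVec]
    rfl
  have hf : ∀ t, HasDerivAt (fun t => v ⬝ᵥ z t)
      (∑ i, v i * (el t i - el τp i) * (Bf.mulVec (z t)) i) t := by
    intro t
    have h1 : HasDerivAt (fun σ => ∑ j, v j * z σ j)
        (∑ j, v j *
          ((Matrix.fromBlocks (Matrix.diagonal (s t)) 0 0 (1 : Matrix (Fin m) (Fin m) ℝ) * Bf
            - Matrix.diagonal d).mulVec (z t)) j) t :=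
      HasDerivAt.fun_sum fun j _ => (hzdyn j t).const_mul (v j)
    rw [hval t] at h1
    exact h1
  have hdiff : Differentiable ℝ (fun t => v ⬝ᵥ z t) := fun t => (hf t).differentiableAt
  have hmono : MonotoneOn (fun t => v ⬝ᵥ z t) (Icc 0 τp) := by
    apply monotoneOn_of_deriv_nonneg (convex_Icc _ _) hdiff.continuous.continuousOn
      hdiff.differentiableOn
    intro x hx
    rw [interior_Icc] at hx
    rw [(hf x).deriv]
    apply Finset.sum_nonneg
    intro i _
    rcases i with a | b
    · have : el τp (Sum.inl a) ≤ el x (Sum.inl a) := hsmono a x τp hx.2.le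
      exact mul_nonneg (mul_nonneg (hv _) (by linarith)) (hBznn x _)
    · have : el x (Sum.inr b) - el τp (Sum.inr b) = 0 := by simp [heldef]
      rw [this, mul_zero, zero_mul]
  have hanti : AntitoneOn (fun t => v ⬝ᵥ z t) (Ici τp) := by
    apply antitoneOn_of_deriv_nonpos (convex_Ici _) hdiff.continuous.continuousOn
      hdiff.differentiableOn
    intro x hx
    rw [interior_Ici] at hx
    rw [(hf x).deriv]
    apply Finset.sum_nonpos
    intro i _
    rcases i with a | b
    · have : el x (Sum.inl a) ≤ el τp (Sum.inl a) := hsmono a τp x (le_of_lt hx)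
      exact mul_nonpos_of_nonpos_of_nonneg
        (mul_nonpos_of_nonneg_of_nonpos (hv _) (by linarith)) (hBznn x _)
    · have : el x (Sum.inr b) - el τp (Sum.inr b) = 0 := by simp [heldef]
      rw [this, mul_zero, zero_mul]
  intro t ht0
  rcases le_total t τp with h | h
  · exact hmono ⟨ht0, h⟩ ⟨hτp, le_refl τp⟩ h
  · exact hanti (self_mem_Ici) h h
end
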